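/- arXiv:2309.16810 — 3 statements merged into one kernel-verified Lean document; each statement's English description precedes it below -/
import Mathlib

section
/- Let D be a weighted oriented graph such that the edge ideal I(D) is componentwise linear. Then none of the following four weighted oriented graphs can occur as an induced weighted oriented subgraph of D: (D_1) the oriented path with edges (x_1,x_2),(x_2,x_3) and w(x_2) > 1, w(x_3) > 1; (D_2) the graph with edges (x_2,x_1),(x_2,x_3) and w(x_1) > 1, w(x_3) > 1; (D_3) the oriented 3-cycle with edges (x_1,x_2),(x_2,x_3),(x_3,x_1) and w(x_i) > 1 for all i; (D_4) the triangle with edges (x_1,x_2),(x_1,x_3),(x_3,x_2) and w(x_2) > 1, w(x_3) > 1. -/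
open MvPolynomial Module

noncomputable section

/-- The polynomial ring `K[x_1, ..., x_n]`. -/
abbrev PolyR (K : Type) [Field K] (n : ℕ) : Type := MvPolynomial (Fin n) K

variable (K : Type) [Field K] (n : ℕ)

/-- The Koszul differential on `K(x_1,...,x_n) ⊗ R`, where homological degree `i`
elements are encoded as functions on `Finset (Fin n)` supported on sets of card `i`. -/
def kDiff : (Finset (Fin n) → PolyR K n) →ₗ[K] (Finset (Fin n) → PolyR K n) where
  toFun f T := ∑ k ∈ Tᶜ,
      ((-1 : ℤ) ^ (((insert k T).filter (fun j => j < k)).card)) • (X k * f (insert k T))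
  map_add' f g := by
    funext T
    simp [mul_add, smul_add, Finset.sum_add_distrib]
  map_smul' c f := by
    funext T
    simp [Finset.smul_sum, mul_smul_comm, smul_comm c]

/-- The internal-degree-`j`, homological-degree-`i` component of the Koszul complex
of the ideal `I`: functions supported on subsets of cardinality `i`, whose values lie
in `I` and are homogeneous of degree `j - i`. -/
def kosC (I : Ideal (PolyR K n)) (i j : ℕ) : Submodule K (Finset (Fin n) → PolyR K n) :=
  if i ≤ j then
    ⨅ S : Finset (Fin n),
      Submodule.comap (LinearMap.proj S)
        (if S.card = i then
            (Submodule.restrictScalars K I ⊓ homogeneousSubmodule (Fin n) K (j - i))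
          else ⊥)
  else ⊥

/-- The graded Betti number `β_{i,j}(I) = dim_K Tor_i(I, K)_j`, computed as the dimension of
the `(i,j)`-th graded piece of the homology of the Koszul complex `K(x_1,...,x_n) ⊗ I`. -/
def bettiNum (I : Ideal (PolyR K n)) (i j : ℕ) : ℕ :=
  finrank K ↥(kosC K n I i j ⊓ LinearMap.ker (kDiff K n))
    - finrank K ↥(Submodule.map (kDiff K n) (kosC K n I (i + 1) j)
        ⊓ (kosC K n I i j ⊓ LinearMap.ker (kDiff K n)))

/-- The Castelnuovo–Mumford regularity of a homogeneous ideal `I ⊆ K[x_1,...,x_n]`: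
`reg I = max { j - i | β_{i,j}(I) ≠ 0 }`. -/
def CMreg (I : Ideal (PolyR K n)) : ℕ :=
  sSup {d : ℕ | ∃ i j : ℕ, bettiNum K n I i j ≠ 0 ∧ d = j - i}

/-- `I_⟨d⟩`: the ideal generated by the degree-`d` homogeneous component of `I`. -/
def idealComponent (I : Ideal (PolyR K n)) (d : ℕ) : Ideal (PolyR K n) :=
  Ideal.span ((I : Set (PolyR K n)) ∩ {f | f.IsHomogeneous d})

/-- An ideal is componentwise linear if for every `d ≥ 0` the ideal `I_⟨d⟩` is zero or
has a `d`-linear resolution (equivalently, `reg (I_⟨d⟩) = d`). -/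
def ComponentwiseLinear (I : Ideal (PolyR K n)) : Prop :=
  ∀ d : ℕ, idealComponent K n I d = ⊥ ∨ CMreg K n (idealComponent K n I d) = d

/-- A monomial ideal is an ideal generated by monomials. -/
def IsMonomialIdeal (I : Ideal (PolyR K n)) : Prop :=
  ∃ A : Set (Fin n →₀ ℕ), I = Ideal.span ((fun a => monomial a (1 : K)) '' A)

/-- The set `G(I)` of (exponent vectors of) the minimal monomial generators of `I`:
monomials in `I` which are not divisible by any other monomial of `I`. -/
def minMonomialGens (I : Ideal (PolyR K n)) : Set (Fin n →₀ ℕ) :=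
  {a | (monomial a (1 : K)) ∈ I ∧
    ∀ b : Fin n →₀ ℕ, b ≤ a → b ≠ a → (monomial b (1 : K)) ∉ I}

/-- Vertex splittable monomial ideals (Moradi–Khosh-Ahang):
`I = (v)`, `I = 0`, `I = R`, or `I = x I₁ + I₂` where `I₁, I₂` are vertex splittable ideals in
`K[X ∖ {x}]`, `I₂ ⊆ I₁`, and `G(I)` is the disjoint union of `G(xI₁)` and `G(I₂)`. -/
inductive VertexSplittable : Ideal (PolyR K n) → Prop
  | principal (a : Fin n →₀ ℕ) : VertexSplittable (Ideal.span {(monomial a (1 : K) : PolyR K n)})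
  | bot : VertexSplittable ⊥
  | top : VertexSplittable ⊤
  | split (x : Fin n) (I₁ I₂ : Ideal (PolyR K n)) :
      VertexSplittable I₁ → VertexSplittable I₂ →
      (∀ a ∈ minMonomialGens K n I₁, a x = 0) →
      (∀ a ∈ minMonomialGens K n I₂, a x = 0) →
      I₂ ≤ I₁ →
      minMonomialGens K n (Ideal.span {(X x : PolyR K n)} * I₁ + I₂) =
        ((fun a => a + Finsupp.single x 1) '' minMonomialGens K n I₁) ∪
          minMonomialGens K n I₂ →
      Disjoint ((fun a => a + Finsupp.single x 1) '' minMonomialGens K n I₁)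
        (minMonomialGens K n I₂) →
      VertexSplittable (Ideal.span {(X x : PolyR K n)} * I₁ + I₂)

/-- A monomial ideal has linear quotients if its minimal monomial generators can be
ordered `u_1, ..., u_m` so that each colon ideal `((u_1,...,u_{i-1}) : u_i)` is generated by
a subset of the variables. -/
def HasLinearQuotients (I : Ideal (PolyR K n)) : Prop :=
  ∃ (m : ℕ) (u : Fin m → (Fin n →₀ ℕ)),
    Function.Injective u ∧
    minMonomialGens K n I = Set.range u ∧
    ∀ i : Fin m, 0 < (i : ℕ) →
      ∃ S : Set (Fin n),
        Submodule.colon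
            (Ideal.span ((fun j : Fin m => (monomial (u j) (1 : K) : PolyR K n)) ''
              {j : Fin m | (j : ℕ) < (i : ℕ)}))
            (Ideal.span {(monomial (u i) (1 : K) : PolyR K n)}) =
          Ideal.span ((fun v => (X v : PolyR K n)) '' S)

/-- A weighted oriented graph on the vertex set `{x_1, ..., x_n}`: a set of directed edges
(ordered pairs of distinct vertices) together with a weight function `w : V → ℤ_{≥1}`. -/
structure WOGraph (n : ℕ) where
  E : Set (Fin n × Fin n)
  w : Fin n → ℕ
  loopless : ∀ v, (v, v) ∉ E
  one_le_w : ∀ v, 1 ≤ w v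

/-- The edge ideal `I(D) = (x y^{w(y)} : (x,y) ∈ E(D))` of a weighted oriented graph. -/
def edgeIdeal (D : WOGraph n) : Ideal (PolyR K n) :=
  Ideal.span {m : PolyR K n | ∃ e ∈ D.E, m = X e.1 * X e.2 ^ D.w e.2}

/-- The underlying simple graph of a weighted oriented graph. -/
def underlying (D : WOGraph n) : SimpleGraph (Fin n) where
  Adj x y := x ≠ y ∧ ((x, y) ∈ D.E ∨ (y, x) ∈ D.E)
  symm := ⟨fun x y h => ⟨h.1.symm, h.2.symm⟩⟩
  loopless := ⟨fun x h => h.1 rfl⟩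

/-- The simple graph `H(I(D)_⟨2⟩)`, whose edges are the pairs `{x,y}` with `xy ∈ I(D)`,
so that `I(H) = I(D)_⟨2⟩`. -/
def Hgraph (D : WOGraph n) : SimpleGraph (Fin n) where
  Adj x y := x ≠ y ∧ (X x * X y : PolyR K n) ∈ edgeIdeal K n D
  symm := ⟨fun x y h => ⟨h.1.symm, by rw [mul_comm]; exact h.2⟩⟩
  loopless := ⟨fun x h => h.1 rfl⟩

/-- `f : Fin k → V` is an induced cycle of length `k` in `G`: `f` is injective and the
adjacencies among its image are exactly the consecutive (cyclic) ones. -/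
def IsInducedCycle {V : Type} (G : SimpleGraph V) (k : ℕ) (f : Fin k → V) : Prop :=
  Function.Injective f ∧
    ∀ a b : Fin k, G.Adj (f a) (f b) ↔
      (((a : ℕ) + 1) % k = (b : ℕ) ∨ ((b : ℕ) + 1) % k = (a : ℕ))

/-- A simple graph is chordal if it has no induced cycle of length `≥ 4`. -/
def Chordal {V : Type} (G : SimpleGraph V) : Prop :=
  ∀ k : ℕ, 4 ≤ k → ∀ f : Fin k → V, ¬ IsInducedCycle G k f

/-- A vertex cover of `G`: a set of vertices meeting every edge. -/
def IsVertexCover {V : Type} (G : SimpleGraph V) (C : Set V) : Prop :=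
  ∀ ⦃x y : V⦄, G.Adj x y → x ∈ C ∨ y ∈ C

/-- A minimal vertex cover: a vertex cover minimal with respect to inclusion. -/
def IsMinimalVertexCover {V : Type} (G : SimpleGraph V) (C : Set V) : Prop :=
  IsVertexCover G C ∧ ∀ C' ⊆ C, IsVertexCover G C' → C' = C

end

noncomputable section AuxProof

open MvPolynomial Module

variable {K : Type} [Field K] {n : ℕ}

lemma Finsupp.degree_add' {σ : Type*} (a b : σ →₀ ℕ) :
    (a + b).degree = a.degree + b.degree := by
  simp only [Finsupp.degree_eq_weight_one, map_add]

lemma Finsupp.degree_single' {σ : Type*} (x : σ) (k : ℕ) :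
    (Finsupp.single x k).degree = k := by
  simp [Finsupp.degree_eq_weight_one, Finsupp.weight_apply, Finsupp.sum_single_index]

/-- Exponent vector of the generator of the edge ideal attached to an edge. -/
def genExp (D : WOGraph n) (e : Fin n × Fin n) : Fin n →₀ ℕ :=
  Finsupp.single e.1 1 + Finsupp.single e.2 (D.w e.2)

lemma gen_eq (D : WOGraph n) (e : Fin n × Fin n) :
    (X e.1 * X e.2 ^ D.w e.2 : PolyR K n) = monomial (genExp D e) 1 := by
  have hX : (X e.1 : PolyR K n) = monomial (Finsupp.single e.1 1) 1 := by
    rw [← X_pow_eq_monomial, pow_one]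
  rw [hX, X_pow_eq_monomial, monomial_mul, one_mul, genExp]

/-- `β` dominates the exponent of some edge generator. -/
def Qgen (D : WOGraph n) (β : Fin n →₀ ℕ) : Prop := ∃ e ∈ D.E, genExp D e ≤ β

/-- `β` dominates a degree-`d` multiple of some edge generator. -/
def QD (D : WOGraph n) (d : ℕ) (β : Fin n →₀ ℕ) : Prop :=
  ∃ β', β' ≤ β ∧ β'.degree = d ∧ Qgen D β'

lemma Qgen_mono (D : WOGraph n) : ∀ β γ : Fin n →₀ ℕ, β ≤ γ → Qgen D β → Qgen D γ :=
  fun _ _ h ⟨e, he, hle⟩ => ⟨e, he, hle.trans h⟩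

lemma QD_mono (D : WOGraph n) (d : ℕ) : ∀ β γ : Fin n →₀ ℕ, β ≤ γ → QD D d β → QD D d γ :=
  fun _ _ h ⟨β', hle, hd, hg⟩ => ⟨β', hle.trans h, hd, hg⟩

/-- The ideal of polynomials all of whose monomials satisfy an upward-closed predicate `Q`. -/
def monCl (Q : (Fin n →₀ ℕ) → Prop) (hQ : ∀ β γ : Fin n →₀ ℕ, β ≤ γ → Q β → Q γ) :
    Ideal (PolyR K n) where
  carrier := {f | ∀ β ∈ f.support, Q β}
  zero_mem' := by simp
  add_mem' := by
    intro f g hf hg β hβ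
    rcases Finset.mem_union.mp (MvPolynomial.support_add hβ) with h | h
    exacts [hf β h, hg β h]
  smul_mem' := by
    intro c f hf β hβ
    rw [smul_eq_mul] at hβ
    rcases Finset.mem_add.mp (MvPolynomial.support_mul c f hβ) with ⟨δ, _, γ, hγ, rfl⟩
    exact hQ γ (δ + γ) le_add_self (hf γ hγ)

lemma mem_monCl {Q : (Fin n →₀ ℕ) → Prop} {hQ} {f : PolyR K n} :
    f ∈ monCl (K := K) Q hQ ↔ ∀ β ∈ f.support, Q β := Iff.rfl

lemma edgeIdeal_le_monCl (D : WOGraph n) :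
    edgeIdeal K n D ≤ monCl (Qgen D) (Qgen_mono D) := by
  classical
  rw [edgeIdeal, Ideal.span_le]
  rintro m ⟨e, he, rfl⟩
  intro β hβ
  rw [gen_eq, MvPolynomial.support_monomial, if_neg one_ne_zero, Finset.mem_singleton] at hβ
  exact ⟨e, he, hβ ▸ le_refl _⟩

lemma idealComponent_le_monCl (D : WOGraph n) (d : ℕ) :
    idealComponent K n (edgeIdeal K n D) d ≤ monCl (QD D d) (QD_mono D d) := by
  rw [idealComponent, Ideal.span_le]
  rintro f ⟨hfI, hfh⟩
  intro β hβ
  refine ⟨β, le_refl β, ?_, edgeIdeal_le_monCl D hfI β hβ⟩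
  have h2 : (Finsupp.weight 1) β = d := hfh (MvPolynomial.mem_support_iff.mp hβ)
  rw [Finsupp.degree_eq_weight_one]
  exact h2

lemma coeff_component_eq_zero {D : WOGraph n} {d : ℕ} {f : PolyR K n}
    (hf : f ∈ idealComponent K n (edgeIdeal K n D) d) (γ : Fin n →₀ ℕ)
    (h : ¬ QD D d γ) : MvPolynomial.coeff γ f = 0 := by
  by_contra hc
  exact h (idealComponent_le_monCl D d hf γ (MvPolynomial.mem_support_iff.mpr hc))

lemma monomial_mem_edgeIdeal {D : WOGraph n} {β : Fin n →₀ ℕ} (h : Qgen D β) :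
    (monomial β 1 : PolyR K n) ∈ edgeIdeal K n D := by
  obtain ⟨e, he, hle⟩ := h
  have heq : (monomial β 1 : PolyR K n)
      = monomial (β - genExp D e) 1 * (X e.1 * X e.2 ^ D.w e.2) := by
    rw [gen_eq, monomial_mul, one_mul, tsub_add_cancel_of_le hle]
  rw [heq]
  exact Ideal.mul_mem_left _ _ (Ideal.subset_span ⟨e, he, rfl⟩)

lemma monomial_mem_component {D : WOGraph n} {d : ℕ} {γ β : Fin n →₀ ℕ}
    (hle : β ≤ γ) (hdeg : β.degree = d) (hg : Qgen D β) :
    (monomial γ 1 : PolyR K n) ∈ idealComponent K n (edgeIdeal K n D) d := by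
  have h2 : (monomial β 1 : PolyR K n)
      ∈ ((edgeIdeal K n D : Set (PolyR K n)) ∩ {f | f.IsHomogeneous d}) :=
    ⟨monomial_mem_edgeIdeal hg, isHomogeneous_monomial 1 hdeg⟩
  have heq : (monomial γ 1 : PolyR K n) = monomial (γ - β) 1 * monomial β 1 := by
    rw [monomial_mul, one_mul, tsub_add_cancel_of_le hle]
  rw [idealComponent, heq]
  exact Ideal.mul_mem_left _ _ (Ideal.subset_span h2)

lemma mem_kosC_iff {I : Ideal (PolyR K n)} {i j : ℕ} (hij : i ≤ j)
    (f : Finset (Fin n) → PolyR K n) :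
    f ∈ kosC K n I i j ↔ ∀ S : Finset (Fin n),
      (S.card = i → f S ∈ I ∧ (f S).IsHomogeneous (j - i)) ∧ (S.card ≠ i → f S = 0) := by
  rw [kosC, if_pos hij]
  simp only [Submodule.mem_iInf, Submodule.mem_comap, LinearMap.proj_apply]
  constructor
  · intro h S
    refine ⟨fun hc => ?_, fun hc => ?_⟩
    · have := h S; rw [if_pos hc] at this
      exact ⟨this.1, (MvPolynomial.mem_homogeneousSubmodule _ _).mp this.2⟩
    · have := h S; rw [if_neg hc] at this; simpa using this
  · intro h S
    by_cases hc : S.card = i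
    · rw [if_pos hc]
      exact ⟨((h S).1 hc).1, (MvPolynomial.mem_homogeneousSubmodule _ _).mpr ((h S).1 hc).2⟩
    · rw [if_neg hc]; simpa using (h S).2 hc

lemma kosC_fd (I : Ideal (PolyR K n)) (i j : ℕ) : FiniteDimensional K (kosC K n I i j) := by
  by_cases hij : i ≤ j
  · set V := restrictTotalDegree (Fin n) K j with hV
    have key : ∀ f ∈ kosC K n I i j, ∀ S, f S ∈ V := by
      intro f hf S
      rw [mem_kosC_iff hij] at hf
      by_cases hc : S.card = i
      · have h2 := ((hf S).1 hc).2
        rw [hV, mem_restrictTotalDegree]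
        exact le_trans h2.totalDegree_le (by omega)
      · rw [(hf S).2 hc]; exact zero_mem V
    let Φ : kosC K n I i j →ₗ[K] (Finset (Fin n) → V) :=
      { toFun := fun f S => ⟨f.1 S, key f.1 f.2 S⟩
        map_add' := by intro a b; funext S; ext; simp
        map_smul' := by intro c a; funext S; ext; simp }
    have hinj : Function.Injective Φ := by
      intro a b h
      apply Subtype.ext; funext S
      have := congrFun h S
      simpa [Φ, Subtype.ext_iff] using this
    haveI : IsNoetherian K (Finset (Fin n) → V) := IsNoetherian.iff_fg.mpr inferInstance
    exact Module.Finite.of_injective Φ hinj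
  · rw [kosC, if_neg hij]
    infer_instance

lemma bettiNum_ne_zero_of {I : Ideal (PolyR K n)} {i j : ℕ}
    {z : Finset (Fin n) → PolyR K n}
    (hz : z ∈ kosC K n I i j) (hzk : kDiff K n z = 0)
    (φ : (Finset (Fin n) → PolyR K n) →ₗ[K] K)
    (hφz : φ z ≠ 0)
    (hφB : ∀ g ∈ kosC K n I (i + 1) j, φ (kDiff K n g) = 0) :
    bettiNum K n I i j ≠ 0 := by
  haveI := kosC_fd I i j
  set Z := kosC K n I i j ⊓ LinearMap.ker (kDiff K n) with hZ
  haveI : FiniteDimensional K Z := Submodule.finiteDimensional_of_le inf_le_left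
  set W := Submodule.map (kDiff K n) (kosC K n I (i + 1) j) ⊓ Z with hW
  have hzZ : z ∈ Z := ⟨hz, LinearMap.mem_ker.mpr hzk⟩
  have hlt : W < Z := by
    refine lt_of_le_of_ne inf_le_right (fun hEq => ?_)
    have hzW : z ∈ W := hEq ▸ hzZ
    obtain ⟨g, hg, hgz⟩ := hzW.1
    exact hφz (hgz ▸ hφB g hg)
  have hfr := Submodule.finrank_lt_finrank_of_lt hlt
  have hb : bettiNum K n I i j = finrank K Z - finrank K W := rfl
  omega

lemma CMreg_ne {I : Ideal (PolyR K n)} {d : ℕ} (i j : ℕ)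
    (hb : bettiNum K n I i j ≠ 0) (hde : d < j - i) (hd : d ≠ 0) :
    CMreg K n I ≠ d := by
  intro hC
  rw [CMreg] at hC
  have heS : (j - i) ∈ {e : ℕ | ∃ i' j' : ℕ, bettiNum K n I i' j' ≠ 0 ∧ e = j' - i'} :=
    ⟨i, j, hb, rfl⟩
  by_cases hbdd : BddAbove {e : ℕ | ∃ i' j' : ℕ, bettiNum K n I i' j' ≠ 0 ∧ e = j' - i'}
  · have := le_csSup hbdd heS
    omega
  · rw [csSup_of_not_bddAbove hbdd] at hC
    have h0 : sSup (∅ : Set ℕ) = 0 := csSup_empty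
    omega

lemma not_cwl (D : WOGraph n) (α : Fin n →₀ ℕ) (p q : Fin n) (hpq : p ≠ q)
    (hp : 1 ≤ α p) (hq : 1 ≤ α q)
    (d : ℕ) (hd : d ≠ 0) (hdj : d + 1 < α.degree)
    (hwp : QD D d (α - Finsupp.single p 1))
    (hwq : QD D d (α - Finsupp.single q 1))
    (hnob : ∀ k : Fin n, k ≠ p → ((α - Finsupp.single p 1 : Fin n →₀ ℕ)) k ≠ 0 →
        ∀ β : Fin n →₀ ℕ, β ≤ α - Finsupp.single p 1 - Finsupp.single k 1 → ¬ Qgen D β) :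
    ¬ ComponentwiseLinear K n (edgeIdeal K n D) := by
  classical
  intro hcl
  set I' := idealComponent K n (edgeIdeal K n D) d with hI'
  set j := α.degree with hj
  set μ := α - Finsupp.single p 1 with hμ
  set ν := α - Finsupp.single q 1 with hν
  obtain ⟨βp, hβp, hβpd, hβpg⟩ := hwp
  obtain ⟨βq, hβq, hβqd, hβqg⟩ := hwq
  have hIp : (monomial μ 1 : PolyR K n) ∈ I' := monomial_mem_component hβp hβpd hβpg
  have hIq : (monomial ν 1 : PolyR K n) ∈ I' := monomial_mem_component hβq hβqd hβqg
  have hne : I' ≠ ⊥ := by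
    intro h
    have h2 : (monomial μ 1 : PolyR K n) = 0 := by rw [h] at hIp; simpa using hIp
    have h3 := congrArg (MvPolynomial.coeff μ) h2
    simp [MvPolynomial.coeff_monomial] at h3
  have hreg : CMreg K n I' = d := (hcl d).resolve_left hne
  have hple : Finsupp.single p 1 ≤ α := Finsupp.single_le_iff.mpr hp
  have hqle : Finsupp.single q 1 ≤ α := Finsupp.single_le_iff.mpr hq
  have hμα : μ + Finsupp.single p 1 = α := tsub_add_cancel_of_le hple
  have hνα : ν + Finsupp.single q 1 = α := tsub_add_cancel_of_le hqle
  have hdegμ : μ.degree + 1 = j := by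
    have := congrArg Finsupp.degree hμα
    rwa [Finsupp.degree_add', Finsupp.degree_single'] at this
  have hdegν : ν.degree + 1 = j := by
    have := congrArg Finsupp.degree hνα
    rwa [Finsupp.degree_add', Finsupp.degree_single'] at this
  set z : Finset (Fin n) → PolyR K n := fun S =>
    if S = {p} then monomial μ 1 else if S = {q} then -(monomial ν 1) else 0 with hzdef
  have hzp : z {p} = monomial μ 1 := by simp [hzdef]
  have hzq : z {q} = -(monomial ν 1) := by
    have : ({q} : Finset (Fin n)) ≠ {p} := by simp [hpq.symm]
    simp [hzdef, this]
  have hz0 : ∀ S, S ≠ {p} → S ≠ {q} → z S = 0 := by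
    intro S h1 h2; simp [hzdef, h1, h2]
  have h1j : 1 ≤ j := by omega
  have hz1 : z ∈ kosC K n I' 1 j := by
    rw [mem_kosC_iff h1j]
    intro S
    constructor
    · intro _
      by_cases h1 : S = {p}
      · rw [h1, hzp]
        exact ⟨hIp, isHomogeneous_monomial 1 (by omega)⟩
      · by_cases h2 : S = {q}
        · rw [h2, hzq]
          exact ⟨Submodule.neg_mem _ hIq, (isHomogeneous_monomial 1 (by omega)).neg⟩
        · rw [hz0 S h1 h2]
          exact ⟨Submodule.zero_mem _,
            (MvPolynomial.mem_homogeneousSubmodule _ _).mp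
              (Submodule.zero_mem (homogeneousSubmodule (Fin n) K (j - 1)))⟩
    · intro hc
      have h1 : S ≠ {p} := fun h => hc (by rw [h, Finset.card_singleton])
      have h2 : S ≠ {q} := fun h => hc (by rw [h, Finset.card_singleton])
      exact hz0 S h1 h2
  have hXmul : ∀ (s : Fin n) (m : Fin n →₀ ℕ),
      (X s : PolyR K n) * monomial m 1 = monomial (Finsupp.single s 1 + m) 1 := by
    intro s m
    have hX : (X s : PolyR K n) = monomial (Finsupp.single s 1) 1 := by
      rw [← X_pow_eq_monomial, pow_one]
    rw [hX, monomial_mul, one_mul]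
  have hzk : kDiff K n z = 0 := by
    funext T
    show (∑ k ∈ Tᶜ,
      ((-1 : ℤ) ^ (((insert k T).filter (fun j => j < k)).card)) • (X k * z (insert k T))) = 0
    by_cases hT : T = ∅
    · subst hT
      rw [Finset.compl_empty]
      have hzero : ∀ k ∈ Finset.univ, k ∉ ({p, q} : Finset (Fin n)) →
          ((-1 : ℤ) ^ (((insert k (∅ : Finset (Fin n))).filter (fun j => j < k)).card)) •
            (X k * z (insert k ∅)) = 0 := by
        intro k _ hk
        simp only [Finset.mem_insert, Finset.mem_singleton] at hk
        push_neg at hk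
        rw [Finset.insert_empty, hz0 {k} (by simp [hk.1]) (by simp [hk.2]), mul_zero, smul_zero]
      rw [← Finset.sum_subset (Finset.subset_univ ({p, q} : Finset (Fin n))) hzero,
        Finset.sum_pair hpq]
      have hterm : ∀ k : Fin n,
          ((-1 : ℤ) ^ (((insert k (∅ : Finset (Fin n))).filter (fun j => j < k)).card)) •
            (X k * z (insert k ∅)) = X k * z {k} := by
        intro k
        rw [Finset.insert_empty, Finset.filter_singleton, if_neg (lt_irrefl k),
          Finset.card_empty, pow_zero, one_smul]
      have e1 : Finsupp.single p 1 + μ = α := by rw [add_comm]; exact hμα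
      have e2 : Finsupp.single q 1 + ν = α := by rw [add_comm]; exact hνα
      rw [hterm p, hterm q, hzp, hzq, hXmul, mul_neg, hXmul, e1, e2]
      simp
    · apply Finset.sum_eq_zero
      intro k hk
      have hgen : ∀ w : Fin n, insert k T ≠ {w} := by
        intro w h
        have hTsub : T ⊆ {w} := by rw [← h]; exact Finset.subset_insert k T
        rcases Finset.subset_singleton_iff.mp hTsub with h0 | h0
        · exact hT h0
        · have hkw : k ∈ ({w} : Finset (Fin n)) := h ▸ Finset.mem_insert_self k T
          rw [Finset.mem_singleton] at hkw
          exact (Finset.mem_compl.mp hk) (h0 ▸ (hkw ▸ Finset.mem_singleton_self w))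
      rw [hz0 _ (hgen p) (hgen q), mul_zero, smul_zero]
  set φ : (Finset (Fin n) → PolyR K n) →ₗ[K] K :=
    (MvPolynomial.lcoeff K μ).comp (LinearMap.proj ({p} : Finset (Fin n))) with hφdef
  have hφz : φ z ≠ 0 := by
    rw [hφdef]
    simp only [LinearMap.comp_apply, LinearMap.proj_apply, MvPolynomial.lcoeff_apply]
    rw [hzp, MvPolynomial.coeff_monomial, if_pos rfl]
    exact one_ne_zero
  have hφB : ∀ g ∈ kosC K n I' (1 + 1) j, φ (kDiff K n g) = 0 := by
    intro g hg
    have h2j : (1 + 1 : ℕ) ≤ j := by omega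
    rw [mem_kosC_iff h2j] at hg
    have happ : (kDiff K n g) {p} = ∑ k ∈ ({p} : Finset (Fin n))ᶜ,
        ((-1 : ℤ) ^ (((insert k ({p} : Finset (Fin n))).filter (fun j => j < k)).card)) •
          (X k * g (insert k {p})) := rfl
    rw [hφdef]
    simp only [LinearMap.comp_apply, LinearMap.proj_apply, MvPolynomial.lcoeff_apply]
    rw [happ, MvPolynomial.coeff_sum]
    apply Finset.sum_eq_zero
    intro k hk
    have hkp : k ≠ p := by simpa using hk
    rw [MvPolynomial.coeff_smul, MvPolynomial.coeff_X_mul']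
    by_cases hks : k ∈ μ.support
    · rw [if_pos hks]
      have hcard : (insert k ({p} : Finset (Fin n))).card = 1 + 1 := by
        rw [Finset.card_insert_of_notMem (by simpa using hkp), Finset.card_singleton]
      have hgI : g (insert k {p}) ∈ I' := ((hg _).1 hcard).1
      have hcz : MvPolynomial.coeff (μ - Finsupp.single k 1) (g (insert k {p})) = 0 := by
        apply coeff_component_eq_zero hgI
        rintro ⟨β', hβ'le, hβ'd, hβ'g⟩
        exact hnob k hkp (Finsupp.mem_support_iff.mp hks) β' hβ'le hβ'g
      rw [hcz, smul_zero]
    · rw [if_neg hks, smul_zero]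
  have hbetti := bettiNum_ne_zero_of hz1 hzk φ hφz hφB
  exact CMreg_ne 1 j hbetti (by omega) hd hreg

/-- A finsupp supported on three points. -/
def T3 (x y zv : Fin n) (a b c : ℕ) : Fin n →₀ ℕ :=
  Finsupp.single x a + Finsupp.single y b + Finsupp.single zv c

lemma T3_apply {x y zv : Fin n} (hxy : x ≠ y) (hyz : y ≠ zv) (hxz : x ≠ zv)
    (a b c : ℕ) (v : Fin n) :
    T3 x y zv a b c v = if v = x then a else if v = y then b else if v = zv then c else 0 := by
  by_cases h1 : v = x
  · subst h1; simp [T3, Finsupp.add_apply, Finsupp.single_apply, Ne.symm hxy, Ne.symm hxz]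
  · by_cases h2 : v = y
    · subst h2; simp [T3, Finsupp.add_apply, Finsupp.single_apply, hxy, Ne.symm hyz, h1]
    · by_cases h3 : v = zv
      · subst h3; simp [T3, Finsupp.add_apply, Finsupp.single_apply, hxz, hyz, h1, h2]
      · simp only [T3, Finsupp.add_apply, Finsupp.single_apply, if_neg h1, if_neg h2, if_neg h3]
        rw [if_neg (fun h : x = v => h1 h.symm), if_neg (fun h : y = v => h2 h.symm),
          if_neg (fun h : zv = v => h3 h.symm)]
        simp

lemma T3_le_iff {x y zv : Fin n} (hxy : x ≠ y) (hyz : y ≠ zv) (hxz : x ≠ zv)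
    {a1 b1 c1 a2 b2 c2 : ℕ} :
    T3 x y zv a1 b1 c1 ≤ T3 x y zv a2 b2 c2 ↔ a1 ≤ a2 ∧ b1 ≤ b2 ∧ c1 ≤ c2 := by
  constructor
  · intro h
    have h1 := Finsupp.le_def.mp h x
    have h2 := Finsupp.le_def.mp h y
    have h3 := Finsupp.le_def.mp h zv
    rw [T3_apply hxy hyz hxz, T3_apply hxy hyz hxz] at h1 h2 h3
    simp [hxy, hyz, hxz, Ne.symm hxy, Ne.symm hyz, Ne.symm hxz] at h1 h2 h3
    exact ⟨h1, h2, h3⟩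
  · rintro ⟨h1, h2, h3⟩
    rw [Finsupp.le_def]
    intro v
    rw [T3_apply hxy hyz hxz, T3_apply hxy hyz hxz]
    split_ifs <;> omega

lemma T3_sub {x y zv : Fin n} (hxy : x ≠ y) (hyz : y ≠ zv) (hxz : x ≠ zv)
    (a1 b1 c1 a2 b2 c2 : ℕ) :
    T3 x y zv a1 b1 c1 - T3 x y zv a2 b2 c2 = T3 x y zv (a1 - a2) (b1 - b2) (c1 - c2) := by
  ext v
  rw [Finsupp.tsub_apply, T3_apply hxy hyz hxz, T3_apply hxy hyz hxz, T3_apply hxy hyz hxz]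
  split_ifs <;> omega

lemma T3_degree (x y zv : Fin n) (a b c : ℕ) (hxy : x ≠ y) (hyz : y ≠ zv) (hxz : x ≠ zv) :
    (T3 x y zv a b c).degree = a + b + c := by
  rw [T3, Finsupp.degree_add', Finsupp.degree_add', Finsupp.degree_single', Finsupp.degree_single',
    Finsupp.degree_single']

lemma single_eq_T3_x (x y zv : Fin n) (a : ℕ) : Finsupp.single x a = T3 x y zv a 0 0 := by
  simp [T3]

lemma single_eq_T3_y (x y zv : Fin n) (b : ℕ) : Finsupp.single y b = T3 x y zv 0 b 0 := by
  simp [T3]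

lemma single_eq_T3_z (x y zv : Fin n) (c : ℕ) : Finsupp.single zv c = T3 x y zv 0 0 c := by
  simp [T3]

lemma genExp_T3_xy {D : WOGraph n} {x y zv : Fin n} (hxy : x ≠ y) (hyz : y ≠ zv) (hxz : x ≠ zv) :
    genExp D (x, y) = T3 x y zv 1 (D.w y) 0 := by
  simp [genExp, T3]

lemma genExp_T3_yz {D : WOGraph n} {x y zv : Fin n} (hxy : x ≠ y) (hyz : y ≠ zv) (hxz : x ≠ zv) :
    genExp D (y, zv) = T3 x y zv 0 1 (D.w zv) := by
  simp [genExp, T3]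

lemma genExp_T3_xz {D : WOGraph n} {x y zv : Fin n} (hxy : x ≠ y) (hyz : y ≠ zv) (hxz : x ≠ zv) :
    genExp D (x, zv) = T3 x y zv 1 0 (D.w zv) := by
  simp [genExp, T3]

lemma genExp_T3_zx {D : WOGraph n} {x y zv : Fin n} (hxy : x ≠ y) (hyz : y ≠ zv) (hxz : x ≠ zv) :
    genExp D (zv, x) = T3 x y zv (D.w x) 0 1 := by
  ext v
  rw [T3_apply hxy hyz hxz]
  simp only [genExp, Finsupp.add_apply, Finsupp.single_apply]
  split_ifs <;> omega

lemma genExp_T3_yx {D : WOGraph n} {x y zv : Fin n} (hxy : x ≠ y) (hyz : y ≠ zv) (hxz : x ≠ zv) :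
    genExp D (y, x) = T3 x y zv (D.w x) 1 0 := by
  ext v
  rw [T3_apply hxy hyz hxz]
  simp only [genExp, Finsupp.add_apply, Finsupp.single_apply]
  split_ifs <;> omega

lemma chain_not_cwl (D : WOGraph n) (x y zv : Fin n)
    (hxy : x ≠ y) (hyz : y ≠ zv) (hxz : x ≠ zv)
    (hE1 : (x, y) ∈ D.E) (hE2 : (y, zv) ∈ D.E)
    (hOnly : ∀ e ∈ D.E, (e.1 = x ∨ e.1 = y ∨ e.1 = zv) → (e.2 = x ∨ e.2 = y ∨ e.2 = zv) →
      e = (x, y) ∨ e = (y, zv) ∨ (e = (zv, x) ∧ 2 ≤ D.w x) ∨ e = (x, zv))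
    (hwy : 2 ≤ D.w y) (hwz : 2 ≤ D.w zv) :
    ¬ ComponentwiseLinear K n (edgeIdeal K n D) := by
  classical
  set wy := D.w y with hwydef
  set wz := D.w zv with hwzdef
  set α : Fin n →₀ ℕ := T3 x y zv 1 wy wz with hα
  have hμ3 : α - Finsupp.single zv 1 = T3 x y zv 1 wy (wz - 1) := by
    rw [hα, single_eq_T3_z x y zv 1, T3_sub hxy hyz hxz]
    simp
  have hν3 : α - Finsupp.single y 1 = T3 x y zv 1 (wy - 1) wz := by
    rw [hα, single_eq_T3_y x y zv 1, T3_sub hxy hyz hxz]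
    simp
  have hαz : α zv = wz := by
    rw [hα, T3_apply hxy hyz hxz]
    simp [Ne.symm hxz, Ne.symm hyz]
  have hαy : α y = wy := by
    rw [hα, T3_apply hxy hyz hxz]
    simp [Ne.symm hxy]
  have hαdeg : α.degree = 1 + wy + wz := by
    rw [hα]; exact T3_degree x y zv 1 wy wz hxy hyz hxz
  have hbx : α - Finsupp.single zv 1 - Finsupp.single x 1 = T3 x y zv 0 wy (wz - 1) := by
    rw [hμ3, single_eq_T3_x x y zv 1, T3_sub hxy hyz hxz]
    simp
  have hby : α - Finsupp.single zv 1 - Finsupp.single y 1 = T3 x y zv 1 (wy - 1) (wz - 1) := by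
    rw [hμ3, single_eq_T3_y x y zv 1, T3_sub hxy hyz hxz]
    simp
  have hnob : ∀ k : Fin n, k ≠ zv → ((α - Finsupp.single zv 1 : Fin n →₀ ℕ)) k ≠ 0 →
      ∀ β : Fin n →₀ ℕ, β ≤ α - Finsupp.single zv 1 - Finsupp.single k 1 → ¬ Qgen D β := by
    intro k hk hksupp β hβ hQ
    obtain ⟨e, he, hge⟩ := hQ
    rw [hμ3, T3_apply hxy hyz hxz] at hksupp
    have hgeμk : genExp D e ≤ α - Finsupp.single zv 1 - Finsupp.single k 1 := hge.trans hβ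
    have hgeα : genExp D e ≤ α := hgeμk.trans (tsub_le_self.trans tsub_le_self)
    have hept : ∀ v : Fin n, 1 ≤ genExp D e v → (v = x ∨ v = y ∨ v = zv) := by
      intro v hv
      by_contra hcon
      push_neg at hcon
      have hle := Finsupp.le_def.mp hgeα v
      rw [hα, T3_apply hxy hyz hxz, if_neg hcon.1, if_neg hcon.2.1, if_neg hcon.2.2] at hle
      omega
    have he1 : 1 ≤ genExp D e e.1 := by
      rw [genExp, Finsupp.add_apply, Finsupp.single_eq_same]
      exact Nat.le_add_right 1 _
    have he2 : 1 ≤ genExp D e e.2 := by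
      rw [genExp, Finsupp.add_apply, Finsupp.single_eq_same]
      exact le_trans (D.one_le_w e.2) (Nat.le_add_left _ _)
    have hk' : k = x ∨ k = y := by
      by_cases h1 : k = x
      · exact Or.inl h1
      · by_cases h2 : k = y
        · exact Or.inr h2
        · rw [if_neg h1, if_neg h2, if_neg hk] at hksupp
          exact absurd rfl hksupp
    rcases hk' with rfl | rfl
    · rw [hbx] at hgeμk
      rcases hOnly e he (hept e.1 he1) (hept e.2 he2) with rfl | rfl | ⟨rfl, hwx⟩ | rfl
      · rw [genExp_T3_xy hxy hyz hxz, T3_le_iff hxy hyz hxz] at hgeμk; omega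
      · rw [genExp_T3_yz hxy hyz hxz, T3_le_iff hxy hyz hxz] at hgeμk; omega
      · rw [genExp_T3_zx hxy hyz hxz, T3_le_iff hxy hyz hxz] at hgeμk; omega
      · rw [genExp_T3_xz hxy hyz hxz, T3_le_iff hxy hyz hxz] at hgeμk; omega
    · rw [hby] at hgeμk
      rcases hOnly e he (hept e.1 he1) (hept e.2 he2) with rfl | rfl | ⟨rfl, hwx⟩ | rfl
      · rw [genExp_T3_xy hxy hyz hxz, T3_le_iff hxy hyz hxz] at hgeμk; omega
      · rw [genExp_T3_yz hxy hyz hxz, T3_le_iff hxy hyz hxz] at hgeμk; omega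
      · rw [genExp_T3_zx hxy hyz hxz, T3_le_iff hxy hyz hxz] at hgeμk; omega
      · rw [genExp_T3_xz hxy hyz hxz, T3_le_iff hxy hyz hxz] at hgeμk; omega
  rcases le_or_gt wy wz with hc | hc
  · refine not_cwl D α zv y (Ne.symm hyz) (by rw [hαz]; omega) (by rw [hαy]; omega)
      (wz + 1) (by omega) (by rw [hαdeg]; omega) ?_ ?_ hnob
    · refine ⟨T3 x y zv 1 wy (wz - wy), ?_, ?_, (x, y), hE1, ?_⟩
      · rw [hμ3, T3_le_iff hxy hyz hxz]; omega
      · rw [T3_degree x y zv 1 wy (wz - wy) hxy hyz hxz]; omega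
      · rw [genExp_T3_xy hxy hyz hxz, T3_le_iff hxy hyz hxz]; omega
    · refine ⟨T3 x y zv 0 1 wz, ?_, ?_, (y, zv), hE2, ?_⟩
      · rw [hν3, T3_le_iff hxy hyz hxz]; omega
      · rw [T3_degree x y zv 0 1 wz hxy hyz hxz]; omega
      · rw [genExp_T3_yz hxy hyz hxz]
  · refine not_cwl D α zv y (Ne.symm hyz) (by rw [hαz]; omega) (by rw [hαy]; omega)
      (wy + 1) (by omega) (by rw [hαdeg]; omega) ?_ ?_ hnob
    · refine ⟨T3 x y zv 1 wy 0, ?_, ?_, (x, y), hE1, ?_⟩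
      · rw [hμ3, T3_le_iff hxy hyz hxz]; omega
      · rw [T3_degree x y zv 1 wy 0 hxy hyz hxz]; omega
      · rw [genExp_T3_xy hxy hyz hxz]
    · refine ⟨T3 x y zv 1 (wy - wz) wz, ?_, ?_, (y, zv), hE2, ?_⟩
      · rw [hν3, T3_le_iff hxy hyz hxz]; omega
      · rw [T3_degree x y zv 1 (wy - wz) wz hxy hyz hxz]; omega
      · rw [genExp_T3_yz hxy hyz hxz, T3_le_iff hxy hyz hxz]; omega

lemma sibling_not_cwl (D : WOGraph n) (x y zv : Fin n)
    (hxy : x ≠ y) (hyz : y ≠ zv) (hxz : x ≠ zv)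
    (hE1 : (y, x) ∈ D.E) (hE2 : (y, zv) ∈ D.E)
    (hOnly : ∀ e ∈ D.E, (e.1 = x ∨ e.1 = y ∨ e.1 = zv) → (e.2 = x ∨ e.2 = y ∨ e.2 = zv) →
      e = (y, x) ∨ e = (y, zv))
    (hwx : 2 ≤ D.w x) (hwz : 2 ≤ D.w zv) :
    ¬ ComponentwiseLinear K n (edgeIdeal K n D) := by
  classical
  set wx := D.w x with hwxdef
  set wz := D.w zv with hwzdef
  set α : Fin n →₀ ℕ := T3 x y zv wx 1 wz with hα
  have hμ3 : α - Finsupp.single zv 1 = T3 x y zv wx 1 (wz - 1) := by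
    rw [hα, single_eq_T3_z x y zv 1, T3_sub hxy hyz hxz]
    simp
  have hν3 : α - Finsupp.single x 1 = T3 x y zv (wx - 1) 1 wz := by
    rw [hα, single_eq_T3_x x y zv 1, T3_sub hxy hyz hxz]
    simp
  have hαz : α zv = wz := by
    rw [hα, T3_apply hxy hyz hxz]
    simp [Ne.symm hxz, Ne.symm hyz]
  have hαx : α x = wx := by
    rw [hα, T3_apply hxy hyz hxz]
    simp
  have hαdeg : α.degree = wx + 1 + wz := by
    rw [hα]; exact T3_degree x y zv wx 1 wz hxy hyz hxz
  have hbx : α - Finsupp.single zv 1 - Finsupp.single x 1 = T3 x y zv (wx - 1) 1 (wz - 1) := by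
    rw [hμ3, single_eq_T3_x x y zv 1, T3_sub hxy hyz hxz]
    simp
  have hby : α - Finsupp.single zv 1 - Finsupp.single y 1 = T3 x y zv wx 0 (wz - 1) := by
    rw [hμ3, single_eq_T3_y x y zv 1, T3_sub hxy hyz hxz]
    simp
  have hnob : ∀ k : Fin n, k ≠ zv → ((α - Finsupp.single zv 1 : Fin n →₀ ℕ)) k ≠ 0 →
      ∀ β : Fin n →₀ ℕ, β ≤ α - Finsupp.single zv 1 - Finsupp.single k 1 → ¬ Qgen D β := by
    intro k hk hksupp β hβ hQ
    obtain ⟨e, he, hge⟩ := hQ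
    rw [hμ3, T3_apply hxy hyz hxz] at hksupp
    have hgeμk : genExp D e ≤ α - Finsupp.single zv 1 - Finsupp.single k 1 := hge.trans hβ
    have hgeα : genExp D e ≤ α := hgeμk.trans (tsub_le_self.trans tsub_le_self)
    have hept : ∀ v : Fin n, 1 ≤ genExp D e v → (v = x ∨ v = y ∨ v = zv) := by
      intro v hv
      by_contra hcon
      push_neg at hcon
      have hle := Finsupp.le_def.mp hgeα v
      rw [hα, T3_apply hxy hyz hxz, if_neg hcon.1, if_neg hcon.2.1, if_neg hcon.2.2] at hle
      omega
    have he1 : 1 ≤ genExp D e e.1 := by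
      rw [genExp, Finsupp.add_apply, Finsupp.single_eq_same]
      exact Nat.le_add_right 1 _
    have he2 : 1 ≤ genExp D e e.2 := by
      rw [genExp, Finsupp.add_apply, Finsupp.single_eq_same]
      exact le_trans (D.one_le_w e.2) (Nat.le_add_left _ _)
    have hk' : k = x ∨ k = y := by
      by_cases h1 : k = x
      · exact Or.inl h1
      · by_cases h2 : k = y
        · exact Or.inr h2
        · rw [if_neg h1, if_neg h2, if_neg hk] at hksupp
          exact absurd rfl hksupp
    rcases hk' with rfl | rfl
    · rw [hbx] at hgeμk
      rcases hOnly e he (hept e.1 he1) (hept e.2 he2) with rfl | rfl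
      · rw [genExp_T3_yx hxy hyz hxz, T3_le_iff hxy hyz hxz] at hgeμk; omega
      · rw [genExp_T3_yz hxy hyz hxz, T3_le_iff hxy hyz hxz] at hgeμk; omega
    · rw [hby] at hgeμk
      rcases hOnly e he (hept e.1 he1) (hept e.2 he2) with rfl | rfl
      · rw [genExp_T3_yx hxy hyz hxz, T3_le_iff hxy hyz hxz] at hgeμk; omega
      · rw [genExp_T3_yz hxy hyz hxz, T3_le_iff hxy hyz hxz] at hgeμk; omega
  rcases le_or_gt wx wz with hc | hc
  · refine not_cwl D α zv x (fun h => hxz h.symm) (by rw [hαz]; omega) (by rw [hαx]; omega)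
      (wz + 1) (by omega) (by rw [hαdeg]; omega) ?_ ?_ hnob
    · refine ⟨T3 x y zv wx 1 (wz - wx), ?_, ?_, (y, x), hE1, ?_⟩
      · rw [hμ3, T3_le_iff hxy hyz hxz]; omega
      · rw [T3_degree x y zv wx 1 (wz - wx) hxy hyz hxz]; omega
      · rw [genExp_T3_yx hxy hyz hxz, T3_le_iff hxy hyz hxz]; omega
    · refine ⟨T3 x y zv 0 1 wz, ?_, ?_, (y, zv), hE2, ?_⟩
      · rw [hν3, T3_le_iff hxy hyz hxz]; omega
      · rw [T3_degree x y zv 0 1 wz hxy hyz hxz]; omega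
      · rw [genExp_T3_yz hxy hyz hxz]
  · refine not_cwl D α zv x (fun h => hxz h.symm) (by rw [hαz]; omega) (by rw [hαx]; omega)
      (wx + 1) (by omega) (by rw [hαdeg]; omega) ?_ ?_ hnob
    · refine ⟨T3 x y zv wx 1 0, ?_, ?_, (y, x), hE1, ?_⟩
      · rw [hμ3, T3_le_iff hxy hyz hxz]; omega
      · rw [T3_degree x y zv wx 1 0 hxy hyz hxz]
      · rw [genExp_T3_yx hxy hyz hxz]
    · refine ⟨T3 x y zv (wx - wz) 1 wz, ?_, ?_, (y, zv), hE2, ?_⟩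
      · rw [hν3, T3_le_iff hxy hyz hxz]; omega
      · rw [T3_degree x y zv (wx - wz) 1 wz hxy hyz hxz]; omega
      · rw [genExp_T3_yz hxy hyz hxz, T3_le_iff hxy hyz hxz]; omega

end AuxProof


/-- If `I(D)` is componentwise linear, then none of the four weighted oriented
graphs `D₁, D₂, D₃, D₄` of Figure 1 occurs as an induced weighted oriented subgraph of `D`
(on any three distinct vertices `a, b, c`). -/
theorem stmt6 {K : Type} [Field K] {n : ℕ} (D : WOGraph n)
    (hcl : ComponentwiseLinear K n (edgeIdeal K n D))
    (a b c : Fin n) (hab : a ≠ b) (hbc : b ≠ c) (hac : a ≠ c) :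
    ¬ (({e ∈ D.E | e.1 ∈ ({a, b, c} : Set (Fin n)) ∧ e.2 ∈ ({a, b, c} : Set (Fin n))} =
          {(a, b), (b, c)} ∧ 1 < D.w b ∧ 1 < D.w c) ∨
       ({e ∈ D.E | e.1 ∈ ({a, b, c} : Set (Fin n)) ∧ e.2 ∈ ({a, b, c} : Set (Fin n))} =
          {(b, a), (b, c)} ∧ 1 < D.w a ∧ 1 < D.w c) ∨
       ({e ∈ D.E | e.1 ∈ ({a, b, c} : Set (Fin n)) ∧ e.2 ∈ ({a, b, c} : Set (Fin n))} =
          {(a, b), (b, c), (c, a)} ∧ 1 < D.w a ∧ 1 < D.w b ∧ 1 < D.w c) ∨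
       ({e ∈ D.E | e.1 ∈ ({a, b, c} : Set (Fin n)) ∧ e.2 ∈ ({a, b, c} : Set (Fin n))} =
          {(a, b), (a, c), (c, b)} ∧ 1 < D.w b ∧ 1 < D.w c)) := by
  classical
  rintro (⟨hE, hwb, hwc⟩ | ⟨hE, hwa, hwc⟩ | ⟨hE, hwa, hwb, hwc⟩ | ⟨hE, hwb, hwc⟩)
  · -- D₁ : path (a,b),(b,c)
    refine chain_not_cwl D a b c hab hbc hac ?_ ?_ ?_ (by omega) (by omega) hcl
    · have h : ((a, b) : Fin n × Fin n) ∈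
          {e ∈ D.E | e.1 ∈ ({a, b, c} : Set (Fin n)) ∧ e.2 ∈ ({a, b, c} : Set (Fin n))} := by
        rw [hE]; simp
      exact h.1
    · have h : ((b, c) : Fin n × Fin n) ∈
          {e ∈ D.E | e.1 ∈ ({a, b, c} : Set (Fin n)) ∧ e.2 ∈ ({a, b, c} : Set (Fin n))} := by
        rw [hE]; simp
      exact h.1
    · intro e he h1 h2
      have hm : e ∈ {e ∈ D.E | e.1 ∈ ({a, b, c} : Set (Fin n)) ∧ e.2 ∈ ({a, b, c} : Set (Fin n))} := by
        refine ⟨he, ?_, ?_⟩ <;> simp only [Set.mem_insert_iff, Set.mem_singleton_iff] <;> tauto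
      rw [hE] at hm
      simp only [Set.mem_insert_iff, Set.mem_singleton_iff] at hm
      tauto
  · -- D₂ : (b,a),(b,c)
    refine sibling_not_cwl D a b c hab hbc hac ?_ ?_ ?_ (by omega) (by omega) hcl
    · have h : ((b, a) : Fin n × Fin n) ∈
          {e ∈ D.E | e.1 ∈ ({a, b, c} : Set (Fin n)) ∧ e.2 ∈ ({a, b, c} : Set (Fin n))} := by
        rw [hE]; simp
      exact h.1
    · have h : ((b, c) : Fin n × Fin n) ∈
          {e ∈ D.E | e.1 ∈ ({a, b, c} : Set (Fin n)) ∧ e.2 ∈ ({a, b, c} : Set (Fin n))} := by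
        rw [hE]; simp
      exact h.1
    · intro e he h1 h2
      have hm : e ∈ {e ∈ D.E | e.1 ∈ ({a, b, c} : Set (Fin n)) ∧ e.2 ∈ ({a, b, c} : Set (Fin n))} := by
        refine ⟨he, ?_, ?_⟩ <;> simp only [Set.mem_insert_iff, Set.mem_singleton_iff] <;> tauto
      rw [hE] at hm
      simp only [Set.mem_insert_iff, Set.mem_singleton_iff] at hm
      tauto
  · -- D₃ : 3-cycle (a,b),(b,c),(c,a)
    refine chain_not_cwl D a b c hab hbc hac ?_ ?_ ?_ (by omega) (by omega) hcl
    · have h : ((a, b) : Fin n × Fin n) ∈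
          {e ∈ D.E | e.1 ∈ ({a, b, c} : Set (Fin n)) ∧ e.2 ∈ ({a, b, c} : Set (Fin n))} := by
        rw [hE]; simp
      exact h.1
    · have h : ((b, c) : Fin n × Fin n) ∈
          {e ∈ D.E | e.1 ∈ ({a, b, c} : Set (Fin n)) ∧ e.2 ∈ ({a, b, c} : Set (Fin n))} := by
        rw [hE]; simp
      exact h.1
    · intro e he h1 h2
      have hm : e ∈ {e ∈ D.E | e.1 ∈ ({a, b, c} : Set (Fin n)) ∧ e.2 ∈ ({a, b, c} : Set (Fin n))} := by
        refine ⟨he, ?_, ?_⟩ <;> simp only [Set.mem_insert_iff, Set.mem_singleton_iff] <;> tauto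
      rw [hE] at hm
      simp only [Set.mem_insert_iff, Set.mem_singleton_iff] at hm
      rcases hm with rfl | rfl | rfl
      · tauto
      · tauto
      · exact Or.inr (Or.inr (Or.inl ⟨rfl, by omega⟩))
  · -- D₄ : triangle (a,b),(a,c),(c,b) ; chain with x=a, y=c, zv=b
    refine chain_not_cwl D a c b hac (Ne.symm hbc) hab ?_ ?_ ?_ (by omega) (by omega) hcl
    · have h : ((a, c) : Fin n × Fin n) ∈
          {e ∈ D.E | e.1 ∈ ({a, b, c} : Set (Fin n)) ∧ e.2 ∈ ({a, b, c} : Set (Fin n))} := by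
        rw [hE]; simp
      exact h.1
    · have h : ((c, b) : Fin n × Fin n) ∈
          {e ∈ D.E | e.1 ∈ ({a, b, c} : Set (Fin n)) ∧ e.2 ∈ ({a, b, c} : Set (Fin n))} := by
        rw [hE]; simp
      exact h.1
    · intro e he h1 h2
      have hm : e ∈ {e ∈ D.E | e.1 ∈ ({a, b, c} : Set (Fin n)) ∧ e.2 ∈ ({a, b, c} : Set (Fin n))} := by
        refine ⟨he, ?_, ?_⟩ <;> simp only [Set.mem_insert_iff, Set.mem_singleton_iff] <;> tauto
      rw [hE] at hm
      simp only [Set.mem_insert_iff, Set.mem_singleton_iff] at hm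
      rcases hm with rfl | rfl | rfl
      · exact Or.inr (Or.inr (Or.inr rfl))
      · exact Or.inl rfl
      · exact Or.inr (Or.inl rfl)
end

section
/- Let I ⊆ R = K[x_1,...,x_n] be a monomial ideal of the form I = (I', x_{i_1}, ..., x_{i_r}), where I' is a vertex splittable monomial ideal and none of the variables x_{i_1}, ..., x_{i_r} appears in any minimal generator of I'. Then I is vertex splittable. -/
open MvPolynomial Module

namespace Stmt11Aux

open MvPolynomial

variable {K : Type} [Field K] {n : ℕ}

/-- The monomial ideal with exponent set `B`. -/
noncomputable def mI (K : Type) [Field K] (n : ℕ) (B : Set (Fin n →₀ ℕ)) :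
    Ideal (PolyR K n) :=
  Ideal.span ((fun a => monomial a (1 : K)) '' B)

lemma X_eq (x : Fin n) : (X x : PolyR K n) = monomial (Finsupp.single x 1) 1 := by
  rw [← X_pow_eq_monomial, pow_one]

lemma mem_mI {B : Set (Fin n →₀ ℕ)} {a : Fin n →₀ ℕ} :
    monomial a (1 : K) ∈ mI K n B ↔ ∃ b ∈ B, b ≤ a := by
  rw [mI, mem_ideal_span_monomial_image]
  simp [support_monomial]

lemma mI_mono {B C : Set (Fin n →₀ ℕ)} (h : B ⊆ C) : mI K n B ≤ mI K n C :=
  Ideal.span_mono (Set.image_mono h)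

lemma one_not_mem_mI {B : Set (Fin n →₀ ℕ)} (h : (0 : Fin n →₀ ℕ) ∉ B) :
    (1 : PolyR K n) ∉ mI K n B := by
  intro h1
  have h2 : monomial (0 : Fin n →₀ ℕ) (1 : K) ∈ mI K n B := by simpa using h1
  obtain ⟨b, hb, hle⟩ := mem_mI.1 h2
  have : b = 0 := le_antisymm hle zero_le
  exact h (this ▸ hb)

/-- Any minimal generator belongs to any exponent generating set. -/
lemma minGens_subset {B : Set (Fin n →₀ ℕ)} :
    minMonomialGens K n (mI K n B) ⊆ B := by
  intro a ha
  obtain ⟨hmem, hmin⟩ := ha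
  obtain ⟨b, hb, hle⟩ := mem_mI.1 hmem
  rcases eq_or_ne b a with rfl | hne
  · exact hb
  · exact absurd (mem_mI.2 ⟨b, hb, le_refl b⟩) (hmin b hle hne)

lemma mem_minGens_of_le {I₂ I : Ideal (PolyR K n)} (h : I₂ ≤ I) {a : Fin n →₀ ℕ}
    (ha₂ : monomial a (1 : K) ∈ I₂) (ha : a ∈ minMonomialGens K n I) :
    a ∈ minMonomialGens K n I₂ :=
  ⟨ha₂, fun b hb hne hmem => ha.2 b hb hne (h hmem)⟩

lemma minGens_top : minMonomialGens K n (⊤ : Ideal (PolyR K n)) = {0} := by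
  ext a
  constructor
  · rintro ⟨-, hmin⟩
    by_contra hne
    exact hmin 0 zero_le (Ne.symm hne) Submodule.mem_top
  · rintro rfl
    refine ⟨Submodule.mem_top, fun b hb hne => ?_⟩
    exact absurd (le_antisymm hb zero_le) hne

lemma le_single_one {x : Fin n} {b : Fin n →₀ ℕ} (h : b ≤ Finsupp.single x 1) :
    b = 0 ∨ b = Finsupp.single x 1 := by
  rcases Nat.eq_zero_or_pos (b x) with h0 | h1
  · left
    ext i
    have hi := (Finsupp.le_def.1 h) i
    by_cases hix : i = x
    · subst hix; exact h0
    · rw [Finsupp.single_eq_of_ne' (Ne.symm hix)] at hi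
      simpa using hi
  · right
    ext i
    have hi := (Finsupp.le_def.1 h) i
    by_cases hix : i = x
    · subst hix
      rw [Finsupp.single_eq_same] at hi ⊢
      omega
    · rw [Finsupp.single_eq_of_ne' (Ne.symm hix)] at hi ⊢
      omega

/-- Minimal generators after adding one new variable. -/
lemma minGens_insert {B : Set (Fin n →₀ ℕ)} {x : Fin n} (h0 : (0 : Fin n →₀ ℕ) ∉ B)
    (hB : ∀ a ∈ minMonomialGens K n (mI K n B), a x = 0) :
    minMonomialGens K n (mI K n (insert (Finsupp.single x 1) B)) =
      insert (Finsupp.single x 1) (minMonomialGens K n (mI K n B)) := by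
  have hle : mI K n B ≤ mI K n (insert (Finsupp.single x 1) B) :=
    mI_mono (Set.subset_insert _ _)
  ext a
  constructor
  · intro ha
    have haB := minGens_subset ha
    rcases haB with rfl | haB
    · exact Set.mem_insert _ _
    · exact Set.mem_insert_of_mem _
        (mem_minGens_of_le hle (mem_mI.2 ⟨a, haB, le_refl a⟩) ha)
  · rintro (rfl | ha)
    · refine ⟨mem_mI.2 ⟨_, Set.mem_insert _ _, le_refl _⟩, fun b hb hne hmem => ?_⟩
      rcases le_single_one hb with rfl | rfl
      · have h00 : (0 : Fin n →₀ ℕ) ∉ insert (Finsupp.single x 1) B := by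
          intro h
          rcases h with h | h
          · exact absurd h.symm (by simp [Finsupp.single_eq_zero])
          · exact h0 h
        have : (1 : PolyR K n) ∉ mI K n (insert (Finsupp.single x 1) B) :=
          one_not_mem_mI h00
        exact this (by simpa using hmem)
      · exact hne rfl
    · refine ⟨hle ha.1, fun b hb hne hmem => ?_⟩
      obtain ⟨c, hc, hcb⟩ := mem_mI.1 hmem
      rcases hc with rfl | hc
      · have hbx : 1 ≤ b x := by simpa using (Finsupp.le_def.1 hcb) x
        have hax : 1 ≤ a x := le_trans hbx ((Finsupp.le_def.1 hb) x)
        have := hB a ha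
        omega
      · exact ha.2 b hb hne (mem_mI.2 ⟨c, hc, hcb⟩)

lemma step {B : Set (Fin n →₀ ℕ)} {x : Fin n} (h0 : (0 : Fin n →₀ ℕ) ∉ B)
    (hB : ∀ a ∈ minMonomialGens K n (mI K n B), a x = 0)
    (hvs : VertexSplittable K n (mI K n B)) :
    VertexSplittable K n (mI K n (insert (Finsupp.single x 1) B)) := by
  have hI : mI K n (insert (Finsupp.single x 1) B) =
      Ideal.span {(X x : PolyR K n)} * ⊤ + mI K n B := by
    rw [Ideal.mul_top, mI, Set.image_insert_eq, Ideal.span_insert, ← X_eq, mI,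
      Submodule.add_eq_sup]
  rw [hI]
  refine VertexSplittable.split x ⊤ (mI K n B) VertexSplittable.top hvs ?_ hB le_top ?_ ?_
  · intro a ha
    rw [minGens_top, Set.mem_singleton_iff] at ha
    subst ha
    simp
  · rw [← hI, minGens_insert h0 hB, minGens_top]
    ext a
    simp [eq_comm]
  · rw [minGens_top]
    refine Set.disjoint_left.2 ?_
    rintro a ⟨c, hc, rfl⟩ ha
    simp only [Set.mem_singleton_iff] at hc
    subst hc
    have := hB _ ha
    simp at this

lemma sing_ne_zero {x : Fin n} : (Finsupp.single x 1 : Fin n →₀ ℕ) ≠ 0 := by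
  simp [Finsupp.single_eq_zero]

lemma main {B : Set (Fin n →₀ ℕ)} (h0 : (0 : Fin n →₀ ℕ) ∉ B)
    (hvs : VertexSplittable K n (mI K n B)) (S : Finset (Fin n))
    (hav : ∀ a ∈ minMonomialGens K n (mI K n B), ∀ x ∈ S, a x = 0) :
    VertexSplittable K n
      (mI K n (B ∪ (fun y => Finsupp.single y 1) '' (S : Set (Fin n)))) := by
  classical
  revert hav
  induction S using Finset.induction_on with
  | empty => intro _; simpa using hvs
  | @insert x S hx ih =>
    intro hav
    have hav' : ∀ a ∈ minMonomialGens K n (mI K n B), ∀ y ∈ S, a y = 0 :=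
      fun a ha y hy => hav a ha y (Finset.mem_insert_of_mem hy)
    have ihv := ih hav'
    set B' := B ∪ (fun y => Finsupp.single y 1) '' (S : Set (Fin n)) with hB'
    have h0' : (0 : Fin n →₀ ℕ) ∉ B' := by
      rintro (h | ⟨y, -, hy⟩)
      · exact h0 h
      · exact sing_ne_zero hy
    have hset : B ∪ (fun y => Finsupp.single y 1) '' ((insert x S : Finset (Fin n)) : Set (Fin n))
        = insert (Finsupp.single x 1) B' := by
      rw [hB']
      simp only [Finset.coe_insert, Set.image_insert_eq]
      ext a
      simp only [Set.mem_union, Set.mem_insert_iff]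
      tauto
    rw [hset]
    refine step h0' ?_ ihv
    intro a ha
    rcases minGens_subset ha with haB | ⟨y, hy, rfl⟩
    · have haG : a ∈ minMonomialGens K n (mI K n B) :=
        mem_minGens_of_le (mI_mono Set.subset_union_left)
          (mem_mI.2 ⟨a, haB, le_refl a⟩) ha
      exact hav a haG x (Finset.mem_insert_self _ _)
    · have hyx : y ≠ x := fun h => hx (h ▸ hy)
      simp [Finsupp.single_apply, hyx]

end Stmt11Aux

/-- If `I = (I', x_{i₁}, ..., x_{i_r})` where `I'` is a vertex splittable
monomial ideal in which none of the variables `x_{i₁}, ..., x_{i_r}` appears in a minimal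
generator, then `I` is vertex splittable. -/
theorem stmt11 {K : Type} [Field K] {n : ℕ} (I' : Ideal (PolyR K n))
    (hmono : IsMonomialIdeal K n I')
    (hvs : VertexSplittable K n I') (r : ℕ) (xs : Fin r → Fin n)
    (havoid : ∀ a ∈ minMonomialGens K n I', ∀ j : Fin r, a (xs j) = 0) :
    VertexSplittable K n (I' + Ideal.span (Set.range fun j => (X (xs j) : PolyR K n))) := by
  classical
  obtain ⟨A, rfl⟩ := hmono
  have hIA : Ideal.span ((fun a => monomial a (1 : K)) '' A) = Stmt11Aux.mI K n A := rfl
  by_cases h0 : (0 : Fin n →₀ ℕ) ∈ A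
  · have htop : Stmt11Aux.mI K n A = ⊤ := by
      rw [Ideal.eq_top_iff_one]
      have := (Stmt11Aux.mem_mI (K := K) (B := A) (a := 0)).2 ⟨0, h0, le_refl 0⟩
      simpa using this
    have : Ideal.span ((fun a => monomial a (1 : K)) '' A) +
        Ideal.span (Set.range fun j => (X (xs j) : PolyR K n)) = ⊤ := by
      rw [hIA, htop]; simp
    rw [this]
    exact VertexSplittable.top
  · set S : Finset (Fin n) := Finset.image xs Finset.univ with hS
    have key : Ideal.span ((fun a => monomial a (1 : K)) '' A) +
        Ideal.span (Set.range fun j => (X (xs j) : PolyR K n)) =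
        Stmt11Aux.mI K n (A ∪ (fun y => Finsupp.single y 1) '' (S : Set (Fin n))) := by
      rw [Stmt11Aux.mI, Set.image_union, Ideal.span_union, ← Submodule.add_eq_sup]
      congr 2
      ext p
      simp only [Set.mem_range, Set.mem_image, hS, Finset.coe_image, Finset.coe_univ,
        Set.image_univ]
      constructor
      · rintro ⟨j, rfl⟩
        exact ⟨Finsupp.single (xs j) 1, ⟨xs j, ⟨j, rfl⟩, rfl⟩, (Stmt11Aux.X_eq _).symm⟩
      · rintro ⟨b, ⟨y, ⟨j, rfl⟩, rfl⟩, rfl⟩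
        exact ⟨j, Stmt11Aux.X_eq _⟩
    rw [key]
    refine Stmt11Aux.main h0 hvs S ?_
    intro a ha x hxS
    rw [hS] at hxS
    obtain ⟨j, -, rfl⟩ := Finset.mem_image.1 hxS
    exact havoid a ha j
end

section
/- Let G be a simple graph with at least one edge such that the complement G^c is chordal. Then there exist two adjacent vertices x and y of G such that both neighborhoods N_G(x) and N_G(y) are minimal vertex covers of G. -/
open MvPolynomial Module

open SimpleGraph SimpleGraph.Walk Classical

namespace Stmt18Aux

set_option linter.unusedSectionVars false

variable {V : Type} [DecidableEq V]

/-- Reachability within a vertex set `U`. -/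
def Reach (H : SimpleGraph V) (U : Finset V) (x y : V) : Prop :=
  ∃ w : H.Walk x y, ∀ v ∈ w.support, v ∈ U

lemma Reach.mem_left {H : SimpleGraph V} {U : Finset V} {x y : V} (h : Reach H U x y) : x ∈ U := by
  obtain ⟨w, hw⟩ := h; exact hw _ w.start_mem_support

lemma Reach.mem_right {H : SimpleGraph V} {U : Finset V} {x y : V} (h : Reach H U x y) : y ∈ U := by
  obtain ⟨w, hw⟩ := h; exact hw _ w.end_mem_support

lemma reach_refl {H : SimpleGraph V} {U : Finset V} {x : V} (hx : x ∈ U) : Reach H U x x :=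
  ⟨Walk.nil, by simp [hx]⟩

lemma Reach.symm {H : SimpleGraph V} {U : Finset V} {x y : V} (h : Reach H U x y) :
    Reach H U y x := by
  obtain ⟨w, hw⟩ := h
  exact ⟨w.reverse, by intro v hv; rw [Walk.support_reverse] at hv; exact hw v (List.mem_reverse.mp hv)⟩

lemma Reach.trans {H : SimpleGraph V} {U : Finset V} {x y z : V} (h : Reach H U x y)
    (h' : Reach H U y z) : Reach H U x z := by
  obtain ⟨w, hw⟩ := h; obtain ⟨w', hw'⟩ := h'
  refine ⟨w.append w', ?_⟩
  intro v hv
  rcases (Walk.mem_support_append_iff _ _).mp hv with hv | hv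
  · exact hw v hv
  · exact hw' v hv

lemma Reach.step {H : SimpleGraph V} {U : Finset V} {x y z : V} (h : Reach H U x y)
    (hadj : H.Adj y z) (hz : z ∈ U) : Reach H U x z :=
  h.trans ⟨Walk.cons hadj Walk.nil, by simp [h.mem_right, hz]⟩

/-- If a walk from `c` meets `s` (with `c ≠ s`), then `s` has a neighbor `u` reachable
from `c` by a walk avoiding `s`, inside the support of the original walk. -/
lemma exists_nbr {H : SimpleGraph V} {s : V} {c b : V} (w : H.Walk c b) :
    s ∈ w.support → c ≠ s →
      ∃ u, H.Adj s u ∧ ∃ q : H.Walk c u, s ∉ q.support ∧ ∀ v ∈ q.support, v ∈ w.support := by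
  induction w with
  | nil =>
    intro hs hcs
    rw [Walk.mem_support_nil_iff] at hs
    exact absurd hs.symm hcs
  | @cons c d b h q ih =>
    intro hs hcs
    by_cases hds : d = s
    · subst hds
      refine ⟨c, h.symm, Walk.nil, ?_, ?_⟩
      · simp [Ne.symm hcs]
      · intro v hv; rw [Walk.mem_support_nil_iff] at hv; subst hv; exact Walk.start_mem_support _
    · have hs' : s ∈ q.support := by
        rw [Walk.support_cons] at hs
        rcases List.mem_cons.mp hs with h1 | h1
        · exact absurd h1.symm hcs
        · exact h1
      obtain ⟨u, hu, q', hq's, hq'sub⟩ := ih hs' (fun e => hds e)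
      refine ⟨u, hu, Walk.cons h q', ?_, ?_⟩
      · rw [Walk.support_cons]
        intro hmem
        rcases List.mem_cons.mp hmem with h1 | h1
        · exact hcs h1.symm
        · exact hq's h1
      · intro v hv
        rw [Walk.support_cons] at hv ⊢
        rcases List.mem_cons.mp hv with h1 | h1
        · exact List.mem_cons.mpr (Or.inl h1)
        · exact List.mem_cons.mpr (Or.inr (hq'sub v h1))

lemma exists_prefix {H : SimpleGraph V} {x y : V} (w : H.Walk x y) :
    ∀ i, i ≤ w.length →
      ∃ p : H.Walk x (w.getVert i), p.length = i ∧ ∀ v ∈ p.support, v ∈ w.support := by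
  induction w with
  | nil =>
    intro i hi
    have h0 : i = 0 := by simpa using hi
    subst h0
    exact ⟨Walk.nil.copy rfl (Walk.getVert_zero _).symm, by simp, by
      intro v hv; rw [Walk.support_copy, Walk.mem_support_nil_iff] at hv; subst hv
      exact Walk.start_mem_support _⟩
  | @cons c d b h q ih =>
    intro i hi
    cases i with
    | zero =>
      exact ⟨Walk.nil.copy rfl (Walk.getVert_zero _).symm, by simp, by
        intro v hv; rw [Walk.support_copy, Walk.mem_support_nil_iff] at hv; subst hv
        exact Walk.start_mem_support _⟩
    | succ i =>
      obtain ⟨p, hp, hsub⟩ := ih i (by simpa [Walk.length_cons] using hi)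
      refine ⟨(Walk.cons h p).copy rfl (Walk.getVert_cons_succ q h).symm, ?_, ?_⟩
      · simp [hp]
      · intro v hv
        rw [Walk.support_copy, Walk.support_cons] at hv
        rw [Walk.support_cons]
        rcases List.mem_cons.mp hv with h1 | h1
        · exact List.mem_cons.mpr (Or.inl h1)
        · exact List.mem_cons.mpr (Or.inr (hsub v h1))

lemma exists_suffix {H : SimpleGraph V} {x y : V} (w : H.Walk x y) :
    ∀ i, i ≤ w.length →
      ∃ p : H.Walk (w.getVert i) y, p.length = w.length - i ∧ ∀ v ∈ p.support, v ∈ w.support := by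
  induction w with
  | nil =>
    intro i hi
    have h0 : i = 0 := by simpa using hi
    subst h0
    exact ⟨Walk.nil.copy (Walk.getVert_zero _).symm rfl, by simp, by
      intro v hv; rw [Walk.support_copy, Walk.mem_support_nil_iff] at hv; subst hv
      exact Walk.start_mem_support _⟩
  | @cons c d b h q ih =>
    intro i hi
    cases i with
    | zero =>
      exact ⟨(Walk.cons h q).copy (Walk.getVert_zero _).symm rfl, by simp, by
        intro v hv; rw [Walk.support_copy] at hv; exact hv⟩
    | succ i =>
      obtain ⟨p, hp, hsub⟩ := ih i (by simpa [Walk.length_cons] using hi)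
      refine ⟨p.copy (Walk.getVert_cons_succ q h).symm rfl, ?_, ?_⟩
      · simpa [Walk.length_cons] using hp
      · intro v hv
        rw [Walk.support_copy] at hv
        rw [Walk.support_cons]
        exact List.mem_cons.mpr (Or.inr (hsub v hv))

end Stmt18Aux

namespace Stmt18Aux

variable {V : Type} [DecidableEq V]

lemma getVert_mem_support {H : SimpleGraph V} {x y : V} (w : H.Walk x y) (i : ℕ) :
    w.getVert i ∈ w.support := by
  induction w generalizing i with
  | nil => rw [Walk.mem_support_nil_iff]; cases i <;> rfl
  | @cons c d b h q ih =>
    cases i with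
    | zero => rw [Walk.getVert_zero]; exact Walk.start_mem_support _
    | succ i =>
      rw [Walk.getVert_cons_succ, Walk.support_cons]
      exact List.mem_cons.mpr (Or.inr (ih i))

lemma exists_min_walk {H : SimpleGraph V} {U : Finset V} {x y : V} (hxy : x ≠ y)
    (hex : ∃ w : H.Walk x y, ∀ v ∈ w.support, v ∈ U) :
    ∃ w : H.Walk x y, (∀ v ∈ w.support, v ∈ U) ∧ 1 ≤ w.length ∧
      (∀ i j, i < j → j ≤ w.length → w.getVert i ≠ w.getVert j) ∧
      (∀ i j, i < j → j ≤ w.length → H.Adj (w.getVert i) (w.getVert j) → j = i + 1) := by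
  classical
  let P : ℕ → Prop := fun k => ∃ w : H.Walk x y, w.length = k ∧ ∀ v ∈ w.support, v ∈ U
  have hP : ∃ k, P k := by obtain ⟨w, hw⟩ := hex; exact ⟨w.length, w, rfl, hw⟩
  obtain ⟨w, hwlen, hwU⟩ := Nat.find_spec hP
  have hmin : ∀ (w' : H.Walk x y), (∀ v ∈ w'.support, v ∈ U) → w.length ≤ w'.length := by
    intro w' hw'
    by_contra hlt
    exact Nat.find_min hP (by omega) ⟨w', rfl, hw'⟩
  have hlen1 : 1 ≤ w.length := by
    rcases Nat.eq_zero_or_pos w.length with h0 | h1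
    · exfalso
      apply hxy
      have h2 := w.getVert_length
      rw [h0] at h2
      rw [← w.getVert_zero, h2]
    · exact h1
  refine ⟨w, hwU, hlen1, ?_, ?_⟩
  · intro i j hij hj heq
    obtain ⟨p, hp, hpsub⟩ := exists_prefix w i (by omega)
    obtain ⟨q, hq, hqsub⟩ := exists_suffix w j hj
    have hlt := hmin ((p.copy rfl heq).append q) (by
      intro v hv
      rcases (Walk.mem_support_append_iff _ _).mp hv with hv | hv
      · rw [Walk.support_copy] at hv; exact hwU v (hpsub v hv)
      · exact hwU v (hqsub v hv))
    rw [Walk.length_append, Walk.length_copy] at hlt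
    omega
  · intro i j hij hj hadj
    by_contra hne
    obtain ⟨p, hp, hpsub⟩ := exists_prefix w i (by omega)
    obtain ⟨q, hq, hqsub⟩ := exists_suffix w j hj
    have hlt := hmin (p.append (Walk.cons hadj q)) (by
      intro v hv
      rcases (Walk.mem_support_append_iff _ _).mp hv with hv | hv
      · exact hwU v (hpsub v hv)
      · rw [Walk.support_cons] at hv
        rcases List.mem_cons.mp hv with hv | hv
        · subst hv; exact hwU _ (getVert_mem_support w i)
        · exact hwU v (hqsub v hv))
    rw [Walk.length_append, Walk.length_cons] at hlt
    omega

end Stmt18Aux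

namespace Stmt18Aux
set_option linter.unusedSectionVars false
variable {V : Type} [DecidableEq V]
open SimpleGraph

lemma no_two_paths {H : SimpleGraph V} (hch : Chordal H)
    {A B : Finset V} (hAB : ∀ u ∈ A, ∀ v ∈ B, u ≠ v ∧ ¬H.Adj u v)
    {s t : V} (hst : s ≠ t) (hsB : s ∉ B) (htB : t ∉ B)
    (hwa : ∃ w : H.Walk s t, ∀ v ∈ w.support, v ∈ insert s (insert t A))
    (hwb : ∃ w : H.Walk s t, ∀ v ∈ w.support, v ∈ insert s (insert t B)) :
    H.Adj s t := by
  classical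
  obtain ⟨wA, hwAU, hwA1, hwAinj, hwAch⟩ := exists_min_walk hst hwa
  obtain ⟨wB, hwBU, hwB1, hwBinj, hwBch⟩ := exists_min_walk hst hwb
  set la := wA.length with hla
  set lb := wB.length with hlb
  rcases Nat.lt_or_ge la 2 with h2a | h2a
  · -- la = 1, so s,t adjacent
    have h1 : la = 1 := by omega
    have := wA.adj_getVert_succ (i := 0) (by omega)
    rwa [Walk.getVert_zero, show (0 + 1 : ℕ) = la from by omega, Walk.getVert_length] at this
  rcases Nat.lt_or_ge lb 2 with h2b | h2b
  · have h1 : lb = 1 := by omega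
    have := wB.adj_getVert_succ (i := 0) (by omega)
    rwa [Walk.getVert_zero, show (0 + 1 : ℕ) = lb from by omega, Walk.getVert_length] at this
  exfalso
  set k := la + lb with hk
  have hk4 : 4 ≤ k := by omega
  have hA0 : wA.getVert 0 = s := wA.getVert_zero
  have hAl : wA.getVert la = t := wA.getVert_length
  have hB0 : wB.getVert 0 = s := wB.getVert_zero
  have hBl : wB.getVert lb = t := wB.getVert_length
  have hAmem : ∀ i, 0 < i → i < la → wA.getVert i ∈ A := by
    intro i h1 h2
    have hm := hwAU _ (getVert_mem_support wA i)
    rcases Finset.mem_insert.mp hm with h | h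
    · exact absurd (by rw [hA0]; exact h.symm) (hwAinj 0 i h1 (by omega))
    rcases Finset.mem_insert.mp h with h | h
    · exact absurd (by rw [hAl]; exact h) (hwAinj i la h2 le_rfl)
    · exact h
  have hBmem : ∀ i, 0 < i → i < lb → wB.getVert i ∈ B := by
    intro i h1 h2
    have hm := hwBU _ (getVert_mem_support wB i)
    rcases Finset.mem_insert.mp hm with h | h
    · exact absurd (by rw [hB0]; exact h.symm) (hwBinj 0 i h1 (by omega))
    rcases Finset.mem_insert.mp h with h | h
    · exact absurd (by rw [hBl]; exact h) (hwBinj i lb h2 le_rfl)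
    · exact h
  set g : ℕ → V := fun m => if m ≤ la then wA.getVert m else wB.getVert (k - m) with hg
  -- ordered adjacency characterization
  have key : ∀ m₁ m₂ : ℕ, m₁ < m₂ → m₂ < k →
      (H.Adj (g m₁) (g m₂) ↔ (m₂ = m₁ + 1 ∨ (m₁ = 0 ∧ m₂ = k - 1))) := by
    intro m₁ m₂ h12 h2k
    by_cases hc1 : m₂ ≤ la
    · have e1 : g m₁ = wA.getVert m₁ := if_pos (by omega)
      have e2 : g m₂ = wA.getVert m₂ := if_pos hc1
      rw [e1, e2]
      constructor
      · intro hadj; exact Or.inl (hwAch m₁ m₂ h12 hc1 hadj)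
      · rintro (h | ⟨h0, hk1⟩)
        · subst h; exact wA.adj_getVert_succ (by omega)
        · omega
    · push_neg at hc1
      by_cases hc2 : m₁ ≤ la
      · have e2 : g m₂ = wB.getVert (k - m₂) := if_neg (by omega)
        have hi1 : 1 ≤ k - m₂ := by omega
        have hilb : k - m₂ < lb := by omega
        rcases Nat.eq_zero_or_pos m₁ with h0 | hpos
        · subst h0
          have e1 : g 0 = wB.getVert 0 := by
            have hr : g 0 = if 0 ≤ la then wA.getVert 0 else wB.getVert (k - 0) := rfl
            rw [hr, if_pos (Nat.zero_le _), hA0]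
            exact hB0.symm
          rw [e1, e2]
          constructor
          · intro hadj
            have := hwBch 0 (k - m₂) (by omega) (by omega) hadj
            exact Or.inr ⟨rfl, by omega⟩
          · rintro (h | ⟨_, h⟩)
            · omega
            · have : k - m₂ = 1 := by omega
              rw [this]
              exact wB.adj_getVert_succ (by omega)
        · rcases Nat.lt_or_ge m₁ la with hlt | hge
          · have e1 : g m₁ = wA.getVert m₁ := if_pos (by omega)
            rw [e1, e2]
            constructor
            · intro hadj
              exact absurd hadj (hAB _ (hAmem m₁ hpos hlt) _ (hBmem _ hi1 hilb)).2
            · rintro (h | ⟨h0, _⟩) <;> omega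
          · have hm1 : m₁ = la := by omega
            have e1 : g m₁ = wB.getVert lb := by
              have hr : g m₁ = if m₁ ≤ la then wA.getVert m₁ else wB.getVert (k - m₁) := rfl
              rw [hr, if_pos (le_of_eq hm1), hm1, hAl]
              exact hBl.symm
            rw [e1, e2]
            constructor
            · intro hadj
              have := hwBch (k - m₂) lb hilb le_rfl hadj.symm
              exact Or.inl (by omega)
            · rintro (h | ⟨h0, _⟩)
              · have : k - m₂ = lb - 1 := by omega
                rw [this]
                have := wB.adj_getVert_succ (i := lb - 1) (by omega)
                rw [show lb - 1 + 1 = lb from by omega] at this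
                exact this.symm
              · omega
      · push_neg at hc2
        have e1 : g m₁ = wB.getVert (k - m₁) := if_neg (by omega)
        have e2 : g m₂ = wB.getVert (k - m₂) := if_neg (by omega)
        have h1 : k - m₂ < k - m₁ := by omega
        have h2 : k - m₁ < lb := by omega
        have h3 : 1 ≤ k - m₂ := by omega
        rw [e1, e2]
        constructor
        · intro hadj
          have := hwBch (k - m₂) (k - m₁) h1 (by omega) hadj.symm
          exact Or.inl (by omega)
        · rintro (h | ⟨h0, _⟩)
          · have he : k - m₂ + 1 = k - m₁ := by omega
            have := wB.adj_getVert_succ (i := k - m₂) (by omega)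
            rw [he] at this
            exact this.symm
          · omega
  have keyne : ∀ m₁ m₂ : ℕ, m₁ < m₂ → m₂ < k → g m₁ ≠ g m₂ := by
    intro m₁ m₂ h12 h2k
    by_cases hc1 : m₂ ≤ la
    · have e1 : g m₁ = wA.getVert m₁ := if_pos (by omega)
      have e2 : g m₂ = wA.getVert m₂ := if_pos hc1
      rw [e1, e2]
      exact hwAinj m₁ m₂ h12 hc1
    · push_neg at hc1
      by_cases hc2 : m₁ ≤ la
      · have e2 : g m₂ = wB.getVert (k - m₂) := if_neg (by omega)
        have hBm : wB.getVert (k - m₂) ∈ B := hBmem _ (by omega) (by omega)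
        have e1 : g m₁ = wA.getVert m₁ := if_pos hc2
        rw [e1, e2]
        rcases Nat.eq_zero_or_pos m₁ with h0 | hpos
        · subst h0; rw [hA0]; intro h; exact hsB (h ▸ hBm)
        rcases Nat.lt_or_ge m₁ la with hlt | hge
        · exact (hAB _ (hAmem m₁ hpos hlt) _ hBm).1
        · have : m₁ = la := by omega
          rw [this, hAl]; intro h; exact htB (h ▸ hBm)
      · push_neg at hc2
        have e1 : g m₁ = wB.getVert (k - m₁) := if_neg (by omega)
        have e2 : g m₂ = wB.getVert (k - m₂) := if_neg (by omega)
        rw [e1, e2]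
        exact fun h => (hwBinj (k - m₂) (k - m₁) (by omega) (by omega)) h.symm
  have hmod : ∀ m : ℕ, m < k → (m + 1) % k = (if m + 1 = k then 0 else m + 1) := by
    intro m hm
    split_ifs with h
    · rw [h, Nat.mod_self]
    · exact Nat.mod_eq_of_lt (by omega)
  apply hch k hk4 (fun m : Fin k => g m.val)
  constructor
  · intro m₁ m₂ he
    rcases Nat.lt_trichotomy m₁.val m₂.val with h | h | h
    · exact absurd he (keyne _ _ h m₂.isLt)
    · exact Fin.ext h
    · exact absurd he.symm (keyne _ _ h m₁.isLt)
  · intro m₁ m₂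
    rcases Nat.lt_trichotomy m₁.val m₂.val with h | h | h
    · rw [key m₁.val m₂.val h m₂.isLt, hmod m₁.val m₁.isLt, hmod m₂.val m₂.isLt]
      have h1 := m₁.isLt
      have h2 := m₂.isLt
      split_ifs <;> omega
    · constructor
      · intro hadj
        rw [Fin.ext h] at hadj
        exact absurd hadj (H.irrefl)
      · intro hc
        rw [hmod m₁.val m₁.isLt, hmod m₂.val m₂.isLt] at hc
        have h1 := m₁.isLt
        have h2 := m₂.isLt
        split_ifs at hc <;> omega
    · rw [SimpleGraph.adj_comm, key m₂.val m₁.val h m₁.isLt,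
        hmod m₁.val m₁.isLt, hmod m₂.val m₂.isLt]
      have h1 := m₁.isLt
      have h2 := m₂.isLt
      split_ifs <;> omega
end Stmt18Aux

namespace Stmt18Aux
set_option linter.unusedSectionVars false
variable {V : Type} [DecidableEq V]
open SimpleGraph

def SimpIn (H : SimpleGraph V) (W : Finset V) (x : V) : Prop :=
  ∀ u ∈ W, ∀ v ∈ W, H.Adj x u → H.Adj x v → u ≠ v → H.Adj u v

lemma walk_support_reach {H : SimpleGraph V} {U : Finset V} {r : V} :
    ∀ {x y : V} (w : H.Walk x y), Reach H U r x → (∀ v ∈ w.support, v ∈ U) →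
      ∀ v ∈ w.support, Reach H U r v := by
  intro x y w
  induction w with
  | nil =>
    intro hr hU v hv
    rw [Walk.mem_support_nil_iff] at hv; subst hv; exact hr
  | @cons c d e h q ih =>
    intro hr hU v hv
    rw [Walk.support_cons] at hv
    rcases List.mem_cons.mp hv with rfl | hv
    · exact hr
    · have hd : Reach H U r d :=
        hr.step h (hU d (by rw [Walk.support_cons]; exact List.mem_cons.mpr (Or.inr q.start_mem_support)))
      exact ih hd (fun v hv => hU v (by rw [Walk.support_cons]; exact List.mem_cons.mpr (Or.inr hv))) v hv

lemma dirac (H : SimpleGraph V) (hch : Chordal H) :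
    ∀ N (W : Finset V), W.card ≤ N → ∀ a b, a ∈ W → b ∈ W → a ≠ b → ¬H.Adj a b →
      ∃ x y, x ∈ W ∧ y ∈ W ∧ x ≠ y ∧ ¬H.Adj x y ∧ SimpIn H W x ∧ SimpIn H W y := by
  intro N
  induction N with
  | zero =>
    intro W hW a b haW
    exfalso
    have := Finset.card_pos.mpr ⟨a, haW⟩
    omega
  | succ N IH =>
    intro W hW a b haW hbW hab hnadj
    classical
    -- the trivial separator
    have hS0 : ¬ Reach H (W \ (W \ {a, b})) a b := by
      rintro ⟨w, hw⟩
      have hsup : ∀ v ∈ w.support, v = a ∨ v = b := by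
        intro v hv
        have := hw v hv
        simp only [Finset.mem_sdiff, Finset.mem_insert, Finset.mem_singleton, not_and, not_not] at this
        rcases this with ⟨h1, h2⟩
        exact h2 h1
      have hlen : w.length ≠ 0 := by
        intro h0
        apply hab
        have h2 := w.getVert_length
        rw [h0] at h2
        rw [← w.getVert_zero, h2]
      have hadj := w.adj_getVert_succ (i := 0) (by omega)
      rw [w.getVert_zero] at hadj
      rcases hsup _ (getVert_mem_support w 1) with h | h
      · rw [h] at hadj; exact H.irrefl hadj
      · rw [h] at hadj; exact hnadj hadj
    -- a minimum-cardinality separator S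
    have hCne : ((W \ {a, b}).powerset.filter (fun S => ¬ Reach H (W \ S) a b)).Nonempty :=
      ⟨W \ {a, b}, Finset.mem_filter.mpr ⟨Finset.mem_powerset.mpr le_rfl, hS0⟩⟩
    obtain ⟨S, hSmem, hSmin⟩ := Finset.exists_min_image _ Finset.card hCne
    rw [Finset.mem_filter, Finset.mem_powerset] at hSmem
    obtain ⟨hSsub, hSsep⟩ := hSmem
    have haS : a ∉ S := by
      intro h
      have := hSsub h
      simp [Finset.mem_sdiff] at this
    have hbS : b ∉ S := by
      intro h
      have := hSsub h
      simp [Finset.mem_sdiff] at this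
    have hSW : S ⊆ W := fun v hv => (Finset.mem_sdiff.mp (hSsub hv)).1
    -- every vertex of S has neighbors in both sides
    have nbr : ∀ s ∈ S, (∃ u, H.Adj s u ∧ Reach H (W \ S) a u) ∧
        (∃ u, H.Adj s u ∧ Reach H (W \ S) b u) := by
      intro s hsS
      have hsa : a ≠ s := fun h => haS (h ▸ hsS)
      have hsb : b ≠ s := fun h => hbS (h ▸ hsS)
      have hre : Reach H (W \ S.erase s) a b := by
        by_contra hre
        have hmem : S.erase s ∈ (W \ {a, b}).powerset.filter (fun S => ¬ Reach H (W \ S) a b) :=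
          Finset.mem_filter.mpr ⟨Finset.mem_powerset.mpr ((Finset.erase_subset _ _).trans hSsub), hre⟩
        have h1 := hSmin _ hmem
        have h2 : (S.erase s).card < S.card := Finset.card_erase_lt_of_mem hsS
        omega
      obtain ⟨w, hw⟩ := hre
      have hs_in : s ∈ w.support := by
        by_contra hs_in
        apply hSsep
        refine ⟨w, fun v hv => ?_⟩
        have h1 := hw v hv
        rw [Finset.mem_sdiff] at h1 ⊢
        refine ⟨h1.1, fun h2 => ?_⟩
        rcases eq_or_ne v s with rfl | hvs
        · exact hs_in hv
        · exact h1.2 (Finset.mem_erase.mpr ⟨hvs, h2⟩)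
      have hWS : ∀ v, v ∈ w.support → v ≠ s → v ∈ W \ S := by
        intro v hv hvs
        have h1 := hw v hv
        rw [Finset.mem_sdiff] at h1 ⊢
        exact ⟨h1.1, fun h2 => h1.2 (Finset.mem_erase.mpr ⟨hvs, h2⟩)⟩
      constructor
      · obtain ⟨u, hu, q, hqs, hqsub⟩ := exists_nbr w hs_in hsa
        refine ⟨u, hu, ⟨q, fun v hv => ?_⟩⟩
        exact hWS v (hqsub v hv) (fun h => hqs (h ▸ hv))
      · have hs_in' : s ∈ w.reverse.support := by
          rw [Walk.support_reverse]; exact List.mem_reverse.mpr hs_in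
        obtain ⟨u, hu, q, hqs, hqsub⟩ := exists_nbr w.reverse hs_in' hsb
        refine ⟨u, hu, ⟨q, fun v hv => ?_⟩⟩
        have := hqsub v hv
        rw [Walk.support_reverse] at this
        exact hWS v (List.mem_reverse.mp this) (fun h => hqs (h ▸ hv))
    -- S is a clique
    have hclique : ∀ s ∈ S, ∀ t ∈ S, s ≠ t → H.Adj s t := by
      intro s hsS t htS hst
      have hmemA : ∀ v ∈ (W \ S).filter (fun v => Reach H (W \ S) a v), Reach H (W \ S) a v :=
        fun v hv => (Finset.mem_filter.mp hv).2
      have hmemB : ∀ v ∈ (W \ S).filter (fun v => Reach H (W \ S) b v), Reach H (W \ S) b v :=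
        fun v hv => (Finset.mem_filter.mp hv).2
      have hAB : ∀ u ∈ (W \ S).filter (fun v => Reach H (W \ S) a v),
          ∀ v ∈ (W \ S).filter (fun v => Reach H (W \ S) b v), u ≠ v ∧ ¬H.Adj u v := by
        intro u hu v hv
        have hru := hmemA u hu
        have hrv := hmemB v hv
        constructor
        · rintro rfl; exact hSsep (hru.trans hrv.symm)
        · intro hadj
          exact hSsep ((hru.step hadj (Finset.mem_filter.mp hv).1).trans hrv.symm)
      have hsB : s ∉ (W \ S).filter (fun v => Reach H (W \ S) b v) :=
        fun h => (Finset.mem_sdiff.mp (Finset.mem_filter.mp h).1).2 hsS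
      have htB : t ∉ (W \ S).filter (fun v => Reach H (W \ S) b v) :=
        fun h => (Finset.mem_sdiff.mp (Finset.mem_filter.mp h).1).2 htS
      have mkwalk : ∀ r : V, (∃ u, H.Adj s u ∧ Reach H (W \ S) r u) →
          (∃ u, H.Adj t u ∧ Reach H (W \ S) r u) →
          ∃ w : H.Walk s t, ∀ v ∈ w.support,
            v ∈ insert s (insert t ((W \ S).filter (fun v => Reach H (W \ S) r v))) := by
        rintro r ⟨us, hus, hrs⟩ ⟨ut, hut, hrt⟩
        obtain ⟨wm, hwm⟩ := hrs.symm.trans hrt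
        refine ⟨Walk.cons hus (wm.concat hut.symm), ?_⟩
        intro v hv
        rw [Walk.support_cons] at hv
        rcases List.mem_cons.mp hv with rfl | hv
        · exact Finset.mem_insert_self _ _
        rw [Walk.support_concat] at hv
        rcases List.mem_append.mp hv with hv | hv
        · refine Finset.mem_insert.mpr (Or.inr (Finset.mem_insert.mpr (Or.inr ?_)))
          exact Finset.mem_filter.mpr ⟨hwm v hv, walk_support_reach wm hrs hwm v hv⟩
        · have hv' := List.mem_singleton.mp hv
          subst hv'
          exact Finset.mem_insert.mpr (Or.inr (Finset.mem_insert_self _ _))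
      exact no_two_paths hch hAB hst hsB htB
        (mkwalk a (nbr s hsS).1 (nbr t htS).1) (mkwalk b (nbr s hsS).2 (nbr t htS).2)
    -- one simplicial vertex on each side
    have side : ∀ c d : V, c ∈ W → c ∉ S → d ∈ W → d ∉ S → ¬ Reach H (W \ S) c d →
        ∃ x, x ∈ W ∧ Reach H (W \ S) c x ∧ SimpIn H W x := by
      intro c d hcW hcS hdW hdS hncd
      have hcWS : c ∈ W \ S := Finset.mem_sdiff.mpr ⟨hcW, hcS⟩
      have hcAc : c ∈ (W \ S).filter (fun v => Reach H (W \ S) c v) :=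
        Finset.mem_filter.mpr ⟨hcWS, reach_refl hcWS⟩
      have hclosure : ∀ x ∈ (W \ S).filter (fun v => Reach H (W \ S) c v), ∀ u ∈ W, H.Adj x u →
          u ∈ (W \ S).filter (fun v => Reach H (W \ S) c v) ∨ u ∈ S := by
        intro x hx u huW hadj
        by_cases huS : u ∈ S
        · exact Or.inr huS
        · left
          have hx' := Finset.mem_filter.mp hx
          exact Finset.mem_filter.mpr ⟨Finset.mem_sdiff.mpr ⟨huW, huS⟩,
            hx'.2.step hadj (Finset.mem_sdiff.mpr ⟨huW, huS⟩)⟩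
      have hW'sub : ((W \ S).filter (fun v => Reach H (W \ S) c v)) ∪ S ⊆ W :=
        Finset.union_subset (fun v hv => (Finset.mem_sdiff.mp (Finset.mem_filter.mp hv).1).1) hSW
      have hdW' : d ∉ ((W \ S).filter (fun v => Reach H (W \ S) c v)) ∪ S := by
        intro hd
        rcases Finset.mem_union.mp hd with hd | hd
        · exact hncd (Finset.mem_filter.mp hd).2
        · exact hdS hd
      have hcard : (((W \ S).filter (fun v => Reach H (W \ S) c v)) ∪ S).card < W.card :=
        Finset.card_lt_card ((Finset.ssubset_iff_of_subset hW'sub).mpr ⟨d, hdW, hdW'⟩)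
      have hkey : ∀ z, z ∈ ((W \ S).filter (fun v => Reach H (W \ S) c v)) ∪ S →
          SimpIn H (((W \ S).filter (fun v => Reach H (W \ S) c v)) ∪ S) z →
          z ∈ (W \ S).filter (fun v => Reach H (W \ S) c v) →
          ∃ x, x ∈ W ∧ Reach H (W \ S) c x ∧ SimpIn H W x := by
        intro z hzW' hsz hzA
        refine ⟨z, hW'sub hzW', (Finset.mem_filter.mp hzA).2, ?_⟩
        intro u1 hu1 v1 hv1 h1 h2 hne
        have hu1' := hclosure z hzA u1 hu1 h1
        have hv1' := hclosure z hzA v1 hv1 h2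
        have hu1'' : u1 ∈ ((W \ S).filter (fun v => Reach H (W \ S) c v)) ∪ S := by
          rcases hu1' with h | h
          exacts [Finset.mem_union_left _ h, Finset.mem_union_right _ h]
        have hv1'' : v1 ∈ ((W \ S).filter (fun v => Reach H (W \ S) c v)) ∪ S := by
          rcases hv1' with h | h
          exacts [Finset.mem_union_left _ h, Finset.mem_union_right _ h]
        exact hsz u1 hu1'' v1 hv1'' h1 h2 hne
      by_cases hpair : ∃ u ∈ ((W \ S).filter (fun v => Reach H (W \ S) c v)) ∪ S,
          ∃ v ∈ ((W \ S).filter (fun v => Reach H (W \ S) c v)) ∪ S, u ≠ v ∧ ¬H.Adj u v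
      · obtain ⟨u, huW', v, hvW', huv, hnuv⟩ := hpair
        obtain ⟨x, y, hxW', hyW', hxy, hnxy, hsx, hsy⟩ :=
          IH _ (by omega) u v huW' hvW' huv hnuv
        by_cases hxA : x ∈ (W \ S).filter (fun v => Reach H (W \ S) c v)
        · exact hkey x hxW' hsx hxA
        · have hxS : x ∈ S := by
            rcases Finset.mem_union.mp hxW' with h | h
            exacts [absurd h hxA, h]
          have hyA : y ∈ (W \ S).filter (fun v => Reach H (W \ S) c v) := by
            rcases Finset.mem_union.mp hyW' with h | h
            · exact h
            · exact absurd (hclique x hxS y h hxy) hnxy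
          exact hkey y hyW' hsy hyA
      · push_neg at hpair
        refine ⟨c, hcW, reach_refl hcWS, ?_⟩
        intro u hu v hv h1 h2 hne
        have hu' : u ∈ ((W \ S).filter (fun v => Reach H (W \ S) c v)) ∪ S := by
          rcases hclosure c hcAc u hu h1 with h | h
          exacts [Finset.mem_union_left _ h, Finset.mem_union_right _ h]
        have hv' : v ∈ ((W \ S).filter (fun v => Reach H (W \ S) c v)) ∪ S := by
          rcases hclosure c hcAc v hv h2 with h | h
          exacts [Finset.mem_union_left _ h, Finset.mem_union_right _ h]
        exact hpair u hu' v hv' hne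
    obtain ⟨x, hxW, hrax, hsx⟩ := side a b haW haS hbW hbS hSsep
    obtain ⟨y, hyW, hrby, hsy⟩ := side b a hbW hbS haW haS (fun h => hSsep h.symm)
    refine ⟨x, y, hxW, hyW, ?_, ?_, hsx, hsy⟩
    · rintro rfl
      exact hSsep (hrax.trans hrby.symm)
    · intro hadj
      exact hSsep ((hrax.step hadj hrby.mem_right).trans hrby.symm)

end Stmt18Aux

/-- If `G` is a simple graph with at least one edge whose complement is chordal,
then there are two adjacent vertices `x`, `y` whose neighborhoods are both minimal vertex
covers of `G`. -/
theorem stmt18 {n : ℕ} (G : SimpleGraph (Fin n)) (hne : ∃ x y : Fin n, G.Adj x y)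
    (hch : Chordal Gᶜ) :
    ∃ x y : Fin n, G.Adj x y ∧ IsMinimalVertexCover G (G.neighborSet x) ∧
      IsMinimalVertexCover G (G.neighborSet y) := by
  classical
  obtain ⟨x0, y0, h0⟩ := hne
  have h0' : ¬(Gᶜ).Adj x0 y0 := fun h => ((G.compl_adj x0 y0).mp h).2 h0
  obtain ⟨x, y, hxW, hyW, hxy, hnadj, hsx, hsy⟩ :=
    Stmt18Aux.dirac Gᶜ hch Finset.univ.card Finset.univ le_rfl x0 y0
      (Finset.mem_univ _) (Finset.mem_univ _) h0.ne h0'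
  have hGxy : G.Adj x y := by
    by_contra h
    exact hnadj ((G.compl_adj x y).mpr ⟨hxy, h⟩)
  have cover : ∀ z : Fin n, Stmt18Aux.SimpIn Gᶜ Finset.univ z →
      IsMinimalVertexCover G (G.neighborSet z) := by
    intro z hz
    have hcov : _root_.IsVertexCover G (G.neighborSet z) := by
      intro u v huv
      by_contra hc
      push_neg at hc
      obtain ⟨hu, hv⟩ := hc
      rw [SimpleGraph.mem_neighborSet] at hu hv
      rcases eq_or_ne u z with rfl | huz
      · exact hv huv
      rcases eq_or_ne v z with rfl | hvz
      · exact hu huv.symm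
      have h1 : (Gᶜ).Adj z u := (G.compl_adj z u).mpr ⟨Ne.symm huz, hu⟩
      have h2 : (Gᶜ).Adj z v := (G.compl_adj z v).mpr ⟨Ne.symm hvz, hv⟩
      have h3 := hz u (Finset.mem_univ _) v (Finset.mem_univ _) h1 h2 huv.ne
      exact ((G.compl_adj u v).mp h3).2 huv
    refine ⟨hcov, ?_⟩
    intro C' hC' hcovC'
    apply Set.Subset.antisymm hC'
    intro v hv
    rw [SimpleGraph.mem_neighborSet] at hv
    rcases hcovC' hv with h | h
    · exfalso
      have := hC' h
      rw [SimpleGraph.mem_neighborSet] at this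
      exact G.irrefl this
    · exact h
  exact ⟨x, y, hGxy, cover x hsx, cover y hsy⟩
end
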